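/- arXiv:2504.21639 — 6 statements merged into one kernel-verified Lean document; each statement's English description precedes it below -/
import Mathlib

section
/- Let M ∈ ℕ with M > 1 and let ϱ = (ϱ_j)_{j∈ℕ} ∈ (0,∞)^∞ satisfy inf_j ϱ_j > 0 and ϱ_j → ∞ as j → ∞. Then there exist constants K > 0 and C_β > 0, depending only on M and ϱ, such that, with c_ν := ∏_{j∈supp ν} max{1,Kϱ_j}² ν_j^M for ν ∈ 𝓕, one has C_β c_ν ≤ β_ν(M,ϱ) for all ν ∈ 𝓕. Moreover, for any fixed K > 0, if q > 2/M and (ϱ_j^{-1})_{j∈ℕ} ∈ ℓ^q(ℕ), then (c_ν^{-1})_{ν∈𝓕} ∈ ℓ^{q/2}(𝓕). -/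
noncomputable section

/-- `β_ν(M,ϱ) = ∏_j ∑_{ℓ=0}^M binom(ν_j,ℓ) ϱ_j^{2ℓ}` for `ν ∈ 𝓕` (finite product over
the support of `ν`, the remaining factors being `1`). -/
def betaF (M : ℕ) (ϱ : ℕ → ℝ) (ν : ℕ →₀ ℕ) : ℝ :=
  ∏ j ∈ ν.support, ∑ ℓ ∈ Finset.range (M + 1), (Nat.choose (ν j) ℓ : ℝ) * ϱ j ^ (2 * ℓ)

/-- `c_ν = ∏_{j ∈ supp ν} max{1, Kϱ_j}² ν_j^M`. -/
def cNu (K : ℝ) (ϱ : ℕ → ℝ) (M : ℕ) (ν : ℕ →₀ ℕ) : ℝ :=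
  ∏ j ∈ ν.support, max 1 (K * ϱ j) ^ 2 * (ν j : ℝ) ^ M

/-! ### Auxiliary lemmas -/

theorem natkey (M n : ℕ) (hM : 1 ≤ M) (hn : M ≤ n) :
    n ^ M ≤ M ^ M * (M.factorial * n.choose M) := by
  obtain ⟨t, rfl⟩ := Nat.exists_eq_add_of_le hn
  have h1 : M + t ≤ M * (M + t + 1 - M) := by
    have : M + t + 1 - M = t + 1 := by omega
    rw [this, Nat.mul_add, Nat.mul_one]
    have := Nat.le_mul_of_pos_left t hM
    omega
  calc (M + t) ^ M ≤ (M * (M + t + 1 - M)) ^ M := Nat.pow_le_pow_left h1 M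
    _ = M ^ M * (M + t + 1 - M) ^ M := mul_pow _ _ _
    _ ≤ M ^ M * ((M + t).descFactorial M) :=
        Nat.mul_le_mul_left _ ((M + t).pow_sub_le_descFactorial M)
    _ = M ^ M * (M.factorial * (M + t).choose M) := by
        rw [Nat.descFactorial_eq_factorial_mul_choose]

theorem natkeyR (M n : ℕ) (hM : 1 ≤ M) (hn : M ≤ n) :
    (n : ℝ) ^ M ≤ (M:ℝ) ^ M * ((M.factorial : ℝ) * (n.choose M : ℝ)) := by
  exact_mod_cast natkey M n hM hn

theorem single_le_beta (M : ℕ) (ρ : ℝ) (hρ : 0 ≤ ρ) (n ℓ : ℕ) (hℓ : ℓ ≤ M) :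
    (n.choose ℓ : ℝ) * ρ ^ (2 * ℓ) ≤
      ∑ l ∈ Finset.range (M + 1), (n.choose l : ℝ) * ρ ^ (2 * l) :=
  Finset.single_le_sum (f := fun l => (n.choose l : ℝ) * ρ ^ (2 * l))
    (fun l _ => by positivity) (Finset.mem_range.2 (Nat.lt_succ_of_le hℓ))

theorem factor_one (M : ℕ) (hM : 1 < M) (ρ : ℝ)
    (hρ : ((M:ℝ) ^ M * (M.factorial : ℝ)) ≤ ρ) (n : ℕ) (hn : 1 ≤ n) :
    max 1 ((((M:ℝ) ^ M)⁻¹) * ρ) ^ 2 * (n : ℝ) ^ M ≤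
      ∑ l ∈ Finset.range (M + 1), (n.choose l : ℝ) * ρ ^ (2 * l) := by
  have hM1 : (1:ℝ) ≤ (M:ℝ) := by exact_mod_cast hM.le
  have hP1 : (1:ℝ) ≤ (M:ℝ) ^ M := one_le_pow₀ hM1
  have hP0 : (0:ℝ) < (M:ℝ) ^ M := by positivity
  have hF1 : (1:ℝ) ≤ (M.factorial : ℝ) := by exact_mod_cast M.factorial_pos
  have hρ1 : (1:ℝ) ≤ ρ := le_trans (by nlinarith) hρ
  have hρ0 : (0:ℝ) ≤ ρ := by linarith
  have claim1 : max 1 ((((M:ℝ) ^ M)⁻¹) * ρ) ^ 2 * (M:ℝ) ^ M ≤ ρ ^ 2 := by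
    rcases max_cases 1 ((((M:ℝ) ^ M)⁻¹) * ρ) with ⟨h1, h2⟩ | ⟨h1, h2⟩
    · rw [h1]
      have : (M:ℝ) ^ M ≤ ρ := le_trans (by nlinarith) hρ
      nlinarith
    · rw [h1]
      have hK : (((M:ℝ) ^ M)⁻¹ * ρ) ^ 2 * (M:ℝ) ^ M
          = ρ ^ 2 * (((M:ℝ) ^ M)⁻¹) := by
        field_simp
      rw [hK]
      have : ((M:ℝ) ^ M)⁻¹ ≤ 1 := inv_le_one_of_one_le₀ hP1
      nlinarith
  have hmax0 : (0:ℝ) ≤ max 1 ((((M:ℝ) ^ M)⁻¹) * ρ) ^ 2 := by positivity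
  rcases lt_or_ge n M with hnM | hnM
  · refine le_trans ?_ (single_le_beta M ρ hρ0 n n hnM.le)
    rw [Nat.choose_self]
    have h1 : (n:ℝ) ^ M ≤ (M:ℝ) ^ M :=
      pow_le_pow_left₀ (by positivity) (by exact_mod_cast hnM.le) M
    have h2 : ρ ^ 2 ≤ ρ ^ (2 * n) := pow_le_pow_right₀ hρ1 (by omega)
    push_cast
    nlinarith
  · refine le_trans ?_ (single_le_beta M ρ hρ0 n M le_rfl)
    have hb := natkeyR M n (by omega) hnM
    have hC0 : (0:ℝ) ≤ (n.choose M : ℝ) := by positivity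
    have hF : (M.factorial : ℝ) ≤ ρ ^ (2 * M - 2) := by
      refine le_trans (le_trans (by nlinarith) hρ) (le_self_pow₀ hρ1 (by omega))
    have hsplit : ρ ^ (2 * M) = ρ ^ 2 * ρ ^ (2 * M - 2) := by
      rw [← pow_add]
      congr 1
      omega
    calc max 1 ((((M:ℝ) ^ M)⁻¹) * ρ) ^ 2 * (n : ℝ) ^ M
        ≤ max 1 ((((M:ℝ) ^ M)⁻¹) * ρ) ^ 2 *
            ((M:ℝ) ^ M * ((M.factorial : ℝ) * (n.choose M : ℝ))) :=
          mul_le_mul_of_nonneg_left hb hmax0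
      _ = (max 1 ((((M:ℝ) ^ M)⁻¹) * ρ) ^ 2 * (M:ℝ) ^ M) *
            ((M.factorial : ℝ) * (n.choose M : ℝ)) := by ring
      _ ≤ ρ ^ 2 * ((M.factorial : ℝ) * (n.choose M : ℝ)) := by
          have : (0:ℝ) ≤ (M.factorial : ℝ) * (n.choose M : ℝ) := by positivity
          exact mul_le_mul_of_nonneg_right claim1 this
      _ ≤ ρ ^ 2 * (ρ ^ (2 * M - 2) * (n.choose M : ℝ)) := by
          have := mul_le_mul_of_nonneg_right hF hC0
          nlinarith
      _ = (n.choose M : ℝ) * ρ ^ (2 * M) := by rw [hsplit]; ring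

noncomputable def deltaSmall (M : ℕ) (ρ : ℝ) : ℝ :=
  min (((M:ℝ) ^ M)⁻¹) (ρ ^ (2 * M) * ((M:ℝ) ^ M * (M.factorial : ℝ))⁻¹) /
    (max 1 ((((M:ℝ) ^ M)⁻¹) * ρ)) ^ 2

theorem deltaSmall_pos (M : ℕ) (hM : 1 < M) (ρ : ℝ) (hρ : 0 < ρ) : 0 < deltaSmall M ρ := by
  unfold deltaSmall
  have hM0 : (0:ℝ) < (M:ℝ) := by exact_mod_cast Nat.zero_lt_of_lt hM
  have h1 : (0:ℝ) < ((M:ℝ) ^ M)⁻¹ := by positivity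
  have h2 : (0:ℝ) < ρ ^ (2 * M) * ((M:ℝ) ^ M * (M.factorial : ℝ))⁻¹ := by
    have : (0:ℝ) < (M.factorial : ℝ) := by exact_mod_cast M.factorial_pos
    positivity
  have h3 : (0:ℝ) < (max 1 ((((M:ℝ) ^ M)⁻¹) * ρ)) ^ 2 := by positivity
  exact div_pos (lt_min h1 h2) h3

theorem factor_small (M : ℕ) (hM : 1 < M) (ρ : ℝ) (hρ : 0 < ρ) (n : ℕ) (hn : 1 ≤ n) :
    deltaSmall M ρ * (max 1 ((((M:ℝ) ^ M)⁻¹) * ρ) ^ 2 * (n : ℝ) ^ M) ≤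
      ∑ l ∈ Finset.range (M + 1), (n.choose l : ℝ) * ρ ^ (2 * l) := by
  have hmax : (0:ℝ) < (max 1 ((((M:ℝ) ^ M)⁻¹) * ρ)) ^ 2 := by positivity
  have hδ : deltaSmall M ρ * (max 1 ((((M:ℝ) ^ M)⁻¹) * ρ)) ^ 2
      = min (((M:ℝ) ^ M)⁻¹) (ρ ^ (2 * M) * ((M:ℝ) ^ M * (M.factorial : ℝ))⁻¹) := by
    unfold deltaSmall
    field_simp
  have hre : deltaSmall M ρ * (max 1 ((((M:ℝ) ^ M)⁻¹) * ρ) ^ 2 * (n : ℝ) ^ M)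
      = min (((M:ℝ) ^ M)⁻¹) (ρ ^ (2 * M) * ((M:ℝ) ^ M * (M.factorial : ℝ))⁻¹) * (n:ℝ) ^ M := by
    rw [← hδ]; ring
  rw [hre]
  have hP0 : (0:ℝ) < (M:ℝ) ^ M := by
    have : (0:ℝ) < (M:ℝ) := by exact_mod_cast Nat.zero_lt_of_lt hM
    positivity
  have hF0 : (0:ℝ) < (M.factorial : ℝ) := by exact_mod_cast M.factorial_pos
  rcases lt_or_ge n M with hnM | hnM
  · refine le_trans ?_ (single_le_beta M ρ hρ.le n 0 (Nat.zero_le M))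
    rw [Nat.choose_zero_right]
    have h1 : (n:ℝ) ^ M ≤ (M:ℝ) ^ M :=
      pow_le_pow_left₀ (by positivity) (by exact_mod_cast hnM.le) M
    have h2 : min (((M:ℝ) ^ M)⁻¹) (ρ ^ (2 * M) * ((M:ℝ) ^ M * (M.factorial : ℝ))⁻¹)
        ≤ ((M:ℝ) ^ M)⁻¹ := min_le_left _ _
    simp only [mul_zero, pow_zero, mul_one, Nat.cast_one]
    calc min (((M:ℝ) ^ M)⁻¹) (ρ ^ (2 * M) * ((M:ℝ) ^ M * (M.factorial : ℝ))⁻¹) * (n:ℝ) ^ M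
        ≤ ((M:ℝ) ^ M)⁻¹ * (M:ℝ) ^ M :=
          mul_le_mul h2 h1 (by positivity) (by positivity)
      _ = 1 := inv_mul_cancel₀ (ne_of_gt hP0)
  · refine le_trans ?_ (single_le_beta M ρ hρ.le n M le_rfl)
    have hb := natkeyR M n (by omega) hnM
    have h2 : min (((M:ℝ) ^ M)⁻¹) (ρ ^ (2 * M) * ((M:ℝ) ^ M * (M.factorial : ℝ))⁻¹)
        ≤ ρ ^ (2 * M) * ((M:ℝ) ^ M * (M.factorial : ℝ))⁻¹ := min_le_right _ _
    calc min (((M:ℝ) ^ M)⁻¹) (ρ ^ (2 * M) * ((M:ℝ) ^ M * (M.factorial : ℝ))⁻¹) * (n:ℝ) ^ M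
        ≤ (ρ ^ (2 * M) * ((M:ℝ) ^ M * (M.factorial : ℝ))⁻¹) * (n:ℝ) ^ M :=
          mul_le_mul_of_nonneg_right h2 (by positivity)
      _ ≤ (ρ ^ (2 * M) * ((M:ℝ) ^ M * (M.factorial : ℝ))⁻¹) *
            ((M:ℝ) ^ M * ((M.factorial : ℝ) * (n.choose M : ℝ))) :=
          mul_le_mul_of_nonneg_left hb (by positivity)
      _ = (n.choose M : ℝ) * ρ ^ (2 * M) := by
          field_simp

theorem sum_prod_le_pi (g : ℕ → ℕ → ℝ) (hg0 : ∀ j n, 0 ≤ g j n)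
    (T : Finset (ℕ →₀ ℕ)) (J : Finset ℕ) (hJ : ∀ ν ∈ T, (ν : ℕ →₀ ℕ).support ⊆ J)
    (N : ℕ) (hN : ∀ ν ∈ T, ∀ j, ν j ≤ N) :
    ∑ ν ∈ T, ∏ j ∈ J, g j (ν j) ≤ ∏ j ∈ J, ∑ n ∈ Finset.range (N + 1), g j n := by
  rw [Finset.prod_sum]
  set F : (ℕ →₀ ℕ) → (∀ a ∈ J, ℕ) := fun ν => fun a _ => ν a with hF
  have hinj : Set.InjOn F T := by
    intro ν hν μ hμ h
    ext j
    by_cases hj : j ∈ J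
    · exact congrFun (congrFun h j) hj
    · have h1 : ν j = 0 := by
        by_contra hc
        exact hj (hJ ν hν (Finsupp.mem_support_iff.2 hc))
      have h2 : μ j = 0 := by
        by_contra hc
        exact hj (hJ μ hμ (Finsupp.mem_support_iff.2 hc))
      rw [h1, h2]
  have himg : T.image F ⊆ J.pi fun _ => Finset.range (N + 1) := by
    intro p hp
    obtain ⟨ν, hν, rfl⟩ := Finset.mem_image.1 hp
    rw [Finset.mem_pi]
    intro a _
    exact Finset.mem_range.2 (Nat.lt_succ_of_le (hN ν hν a))
  calc ∑ ν ∈ T, ∏ j ∈ J, g j (ν j)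
      = ∑ ν ∈ T, ∏ x ∈ J.attach, g x.1 (F ν x.1 x.2) := by
        refine Finset.sum_congr rfl fun ν _ => ?_
        rw [Finset.prod_attach J (fun j => g j (ν j))]
    _ = ∑ p ∈ T.image F, ∏ x ∈ J.attach, g x.1 (p x.1 x.2) :=
        (Finset.sum_image (f := fun p : ∀ a ∈ J, ℕ => ∏ x ∈ J.attach, g x.1 (p x.1 x.2))
          fun ν hν μ hμ h => hinj hν hμ h).symm
    _ ≤ ∑ p ∈ J.pi fun _ => Finset.range (N + 1), ∏ x ∈ J.attach, g x.1 (p x.1 x.2) :=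
        Finset.sum_le_sum_of_subset_of_nonneg himg fun p _ _ =>
          Finset.prod_nonneg fun x _ => hg0 _ _

/-- Lemma 4.1: `c_ν` bounds `β_ν(M,ϱ)` from below up to constants, and summability of
`(c_ν^{-1})_ν` in `ℓ^{q/2}(𝓕)`. -/
theorem cnu_betanu_bound_and_summability
    (M : ℕ) (hM : 1 < M)
    (ϱ : ℕ → ℝ) (hϱpos : ∀ j, 0 < ϱ j)
    (hinf : ∃ ε > 0, ∀ j, ε ≤ ϱ j)
    (htop : Filter.Tendsto ϱ Filter.atTop Filter.atTop) :
    (∃ K > 0, ∃ Cβ > 0, ∀ ν : ℕ →₀ ℕ, Cβ * cNu K ϱ M ν ≤ betaF M ϱ ν) ∧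
    (∀ K > 0, ∀ q : ℝ, 2 / (M : ℝ) < q → (Summable fun j => (ϱ j)⁻¹ ^ q) →
      Summable fun ν : ℕ →₀ ℕ => (cNu K ϱ M ν)⁻¹ ^ (q / 2)) := by
  constructor
  · -- Part 1
    set K : ℝ := ((M:ℝ) ^ M)⁻¹ with hK
    have hM0 : (0:ℝ) < (M:ℝ) := by exact_mod_cast Nat.zero_lt_of_lt hM
    have hK0 : 0 < K := by positivity
    obtain ⟨J, hJ⟩ := (htop.eventually_ge_atTop ((M:ℝ) ^ M * (M.factorial : ℝ))).exists_forall_of_atTop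
    set d : ℕ → ℝ := fun j => if j < J then min 1 (deltaSmall M (ϱ j)) else 1 with hd
    have hd_pos : ∀ j, 0 < d j := by
      intro j
      simp only [hd]
      split
      · exact lt_min one_pos (deltaSmall_pos M hM _ (hϱpos j))
      · exact one_pos
    have hd_le1 : ∀ j, d j ≤ 1 := by
      intro j
      simp only [hd]
      split
      · exact min_le_left _ _
      · exact le_rfl
    have hd_factor : ∀ j, ∀ n : ℕ, 1 ≤ n →
        d j * (max 1 (K * ϱ j) ^ 2 * (n : ℝ) ^ M) ≤
          ∑ l ∈ Finset.range (M + 1), ((n.choose l : ℝ)) * ϱ j ^ (2 * l) := by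
      intro j n hn
      simp only [hd]
      split
      · refine le_trans ?_ (factor_small M hM (ϱ j) (hϱpos j) n hn)
        have h0 : (0:ℝ) ≤ max 1 (K * ϱ j) ^ 2 * (n : ℝ) ^ M := by positivity
        exact mul_le_mul_of_nonneg_right (min_le_right _ _) h0
      · rw [one_mul]
        exact factor_one M hM (ϱ j) (hJ j (by omega)) n hn
    refine ⟨K, hK0, ∏ j ∈ Finset.range J, d j, Finset.prod_pos fun j _ => hd_pos j, ?_⟩
    intro ν
    set S := ν.support with hS
    have step1 : ∏ j ∈ Finset.range J, d j ≤ ∏ j ∈ S, d j := by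
      have e1 : (∏ j ∈ Finset.range J ∩ S, d j) * ∏ j ∈ Finset.range J \ S, d j
          = ∏ j ∈ Finset.range J, d j := Finset.prod_inter_mul_prod_diff _ _ _
      have e2 : ∏ j ∈ Finset.range J \ S, d j ≤ 1 :=
        Finset.prod_le_one (fun j _ => (hd_pos j).le) (fun j _ => hd_le1 j)
      have e3 : ∏ j ∈ Finset.range J ∩ S, d j = ∏ j ∈ S, d j := by
        refine Finset.prod_subset Finset.inter_subset_right ?_
        intro j hjS hj
        have : ¬ j < J := by
          intro hlt
          exact hj (Finset.mem_inter.2 ⟨Finset.mem_range.2 hlt, hjS⟩)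
        simp only [hd, if_neg this]
      have h0 : (0:ℝ) ≤ ∏ j ∈ Finset.range J ∩ S, d j :=
        Finset.prod_nonneg fun j _ => (hd_pos j).le
      calc ∏ j ∈ Finset.range J, d j
          = (∏ j ∈ Finset.range J ∩ S, d j) * ∏ j ∈ Finset.range J \ S, d j := e1.symm
        _ ≤ (∏ j ∈ Finset.range J ∩ S, d j) * 1 := mul_le_mul_of_nonneg_left e2 h0
        _ = ∏ j ∈ S, d j := by rw [mul_one, e3]
    have hc0 : (0:ℝ) ≤ cNu K ϱ M ν := by
      refine Finset.prod_nonneg fun j _ => ?_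
      positivity
    calc (∏ j ∈ Finset.range J, d j) * cNu K ϱ M ν
        ≤ (∏ j ∈ S, d j) * cNu K ϱ M ν := mul_le_mul_of_nonneg_right step1 hc0
      _ = ∏ j ∈ S, d j * (max 1 (K * ϱ j) ^ 2 * (ν j : ℝ) ^ M) := by
          rw [cNu, ← Finset.prod_mul_distrib]
      _ ≤ betaF M ϱ ν := by
          refine Finset.prod_le_prod (fun j _ => mul_nonneg (hd_pos j).le (by positivity)) ?_
          intro j hj
          have hj1 : 1 ≤ ν j := Nat.one_le_iff_ne_zero.2 (Finsupp.mem_support_iff.1 hj)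
          exact hd_factor j (ν j) hj1
  · -- Part 2
    intro K hK q hq hsum
    have hM0 : (0:ℝ) < (M:ℝ) := by exact_mod_cast Nat.zero_lt_of_lt hM
    have hq0 : 0 < q := lt_trans (div_pos two_pos hM0) hq
    have he : 0 < q / 2 := by linarith
    have hr : 1 < (M:ℝ) * (q / 2) := by
      rw [div_lt_iff₀ hM0] at hq
      linarith
    set p : ℕ → ℝ := fun n => ((n:ℝ) ^ ((M:ℝ) * (q / 2)))⁻¹ with hp
    have hpsum : Summable p := Real.summable_nat_rpow_inv.2 hr
    have hp0 : ∀ n, 0 ≤ p n := fun n => by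
      simp only [hp]
      positivity
    set ζ : ℝ := ∑' n, p n with hζ
    have hζ0 : 0 ≤ ζ := tsum_nonneg hp0
    set h : ℕ → ℝ := fun j => (((max 1 (K * ϱ j)) ^ 2)⁻¹) ^ (q / 2) with hh
    have hh0 : ∀ j, 0 ≤ h j := fun j => Real.rpow_nonneg (by positivity) _
    have hhle : ∀ j, h j ≤ K⁻¹ ^ q * ((ϱ j)⁻¹ ^ q) := by
      intro j
      have hx : (0:ℝ) < K * ϱ j := mul_pos hK (hϱpos j)
      have h1 : ((max 1 (K * ϱ j)) ^ 2)⁻¹ ≤ ((K * ϱ j) ^ 2)⁻¹ := by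
        apply inv_anti₀ (by positivity)
        exact pow_le_pow_left₀ hx.le (le_max_right _ _) 2
      have h2 : h j ≤ (((K * ϱ j) ^ 2)⁻¹) ^ (q / 2) :=
        Real.rpow_le_rpow (by positivity) h1 he.le
      refine h2.trans_eq ?_
      have e1 : ((K * ϱ j) ^ 2)⁻¹ = ((K * ϱ j)⁻¹) ^ (2:ℕ) := by
        rw [inv_pow]
      rw [e1, ← Real.rpow_natCast ((K * ϱ j)⁻¹) 2, ← Real.rpow_mul (by positivity)]
      have e2 : ((2:ℕ):ℝ) * (q / 2) = q := by push_cast; ring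
      rw [e2, mul_inv, Real.mul_rpow (inv_nonneg.2 hK.le) (inv_nonneg.2 (hϱpos j).le)]
    have hhsum : Summable h :=
      Summable.of_nonneg_of_le hh0 hhle (hsum.mul_left _)
    set A : ℝ := ∑' j, h j with hA
    set g : ℕ → ℕ → ℝ := fun j n => if n = 0 then 1 else h j * p n with hg
    have hg0 : ∀ j n, 0 ≤ g j n := by
      intro j n
      simp only [hg]
      split
      · exact zero_le_one
      · exact mul_nonneg (hh0 j) (hp0 n)
    -- each term equals a product over any superset of the support
    have term_eq : ∀ (ν : ℕ →₀ ℕ) (J : Finset ℕ), ν.support ⊆ J →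
        (cNu K ϱ M ν)⁻¹ ^ (q / 2) = ∏ j ∈ J, g j (ν j) := by
      intro ν J hJν
      have e1 : (cNu K ϱ M ν)⁻¹ = ∏ j ∈ ν.support, (max 1 (K * ϱ j) ^ 2 * (ν j : ℝ) ^ M)⁻¹ := by
        rw [cNu, ← Finset.prod_inv_distrib]
      rw [e1, ← Real.finset_prod_rpow _ _ (fun j _ => by positivity) _]
      have e2 : ∀ j ∈ ν.support,
          ((max 1 (K * ϱ j) ^ 2 * (ν j : ℝ) ^ M)⁻¹) ^ (q / 2) = g j (ν j) := by
        intro j hj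
        have hνj : ν j ≠ 0 := Finsupp.mem_support_iff.1 hj
        simp only [hg, if_neg hνj]
        rw [mul_inv, Real.mul_rpow (by positivity) (by positivity)]
        congr 1
        -- ((n^M)⁻¹)^(q/2) = (n^(M*(q/2)))⁻¹
        rw [← Real.rpow_natCast ((ν j : ℝ)) M, ← Real.rpow_neg (by positivity),
          ← Real.rpow_mul (by positivity)]
        show ((ν j : ℝ)) ^ (-(M:ℝ) * (q / 2)) = (((ν j : ℝ)) ^ ((M:ℝ) * (q / 2)))⁻¹
        rw [neg_mul, Real.rpow_neg (by positivity)]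
      rw [Finset.prod_congr rfl e2]
      refine Finset.prod_subset hJν ?_
      intro j _ hj
      simp only [hg, Finsupp.notMem_support_iff.1 hj, if_pos rfl]
    -- row bound
    have hrow : ∀ (j N : ℕ), ∑ n ∈ Finset.range (N + 1), g j n ≤ 1 + h j * ζ := by
      intro j N
      have h0mem : 0 ∈ Finset.range (N + 1) := Finset.mem_range.2 (Nat.succ_pos N)
      rw [← Finset.sum_erase_add _ _ h0mem]
      have e0 : g j 0 = 1 := by simp [hg]
      rw [e0, add_comm]
      have : ∑ n ∈ (Finset.range (N + 1)).erase 0, g j n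
          = h j * ∑ n ∈ (Finset.range (N + 1)).erase 0, p n := by
        rw [Finset.mul_sum]
        refine Finset.sum_congr rfl fun n hn => ?_
        simp only [hg, if_neg (Finset.ne_of_mem_erase hn)]
      rw [this]
      have hle : ∑ n ∈ (Finset.range (N + 1)).erase 0, p n ≤ ζ :=
        Summable.sum_le_tsum _ (fun n _ => hp0 n) hpsum
      exact add_le_add le_rfl (mul_le_mul_of_nonneg_left hle (hh0 j))
    -- main bound for arbitrary finite sets
    have hc0 : ∀ ν : ℕ →₀ ℕ, (0:ℝ) ≤ (cNu K ϱ M ν)⁻¹ := fun ν =>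
      inv_nonneg.2 (Finset.prod_nonneg fun j _ => by positivity)
    refine summable_of_sum_le (c := Real.exp (A * ζ))
      (fun ν => Real.rpow_nonneg (hc0 ν) _) ?_
    intro T
    set J : Finset ℕ := T.biUnion Finsupp.support with hJ
    set N : ℕ := T.sup (fun ν => ν.support.sup ν) with hN
    have hJT : ∀ ν ∈ T, (ν : ℕ →₀ ℕ).support ⊆ J := fun ν hν => Finset.subset_biUnion_of_mem _ hν
    have hNT : ∀ ν ∈ T, ∀ j, ν j ≤ N := by
      intro ν hν j
      rcases Nat.eq_zero_or_pos (ν j) with h0 | hpos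
      · omega
      · have hjs : j ∈ ν.support := Finsupp.mem_support_iff.2 (by omega)
        calc ν j ≤ ν.support.sup ν := Finset.le_sup hjs
          _ ≤ N := Finset.le_sup (f := fun ν : ℕ →₀ ℕ => ν.support.sup ν) hν
    calc ∑ ν ∈ T, (cNu K ϱ M ν)⁻¹ ^ (q / 2)
        = ∑ ν ∈ T, ∏ j ∈ J, g j (ν j) :=
          Finset.sum_congr rfl fun ν hν => term_eq ν J (hJT ν hν)
      _ ≤ ∏ j ∈ J, ∑ n ∈ Finset.range (N + 1), g j n := sum_prod_le_pi g hg0 T J hJT N hNT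
      _ ≤ ∏ j ∈ J, (1 + h j * ζ) :=
          Finset.prod_le_prod (fun j _ => Finset.sum_nonneg fun n _ => hg0 j n)
            (fun j _ => hrow j N)
      _ ≤ ∏ j ∈ J, Real.exp (h j * ζ) :=
          Finset.prod_le_prod (fun j _ => by positivity)
            (fun j _ => by rw [add_comm]; exact Real.add_one_le_exp _)
      _ = Real.exp (∑ j ∈ J, h j * ζ) := (Real.exp_sum _ _).symm
      _ ≤ Real.exp (A * ζ) := by
          rw [Real.exp_le_exp, ← Finset.sum_mul]
          exact mul_le_mul_of_nonneg_right (Summable.sum_le_tsum _ (fun j _ => hh0 j) hhsum) hζ0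

end
end

section
/- Let b = (b_j)_{j∈ℕ} ∈ ℓ²(ℕ) have positive entries, let α ∈ (0,∞) and τ ∈ (0,2). Then there exists δ > 0 such that for all N ∈ ℕ, ∫_{ℝ^N} exp(α (∑_{j=1}^N b_j² y_j²)^{τ/2}) γ_N(dy) ≤ δ. -/
open MeasureTheory ProbabilityTheory
open scoped ENNReal NNReal

noncomputable section

/-- The standard Gaussian product measure `γ_N = ⨂_{j=1}^N N(0,1)` on `ℝ^N`. -/
def gammaFin (N : ℕ) : Measure (Fin N → ℝ) := Measure.pi fun _ => gaussianReal 0 1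

/-- Lebesgue integral of a product of coordinate functions w.r.t. a finite product measure. -/
lemma aux_lintegral_pi_prod : ∀ (n : ℕ) (μ : Fin n → Measure ℝ), (∀ i, SigmaFinite (μ i)) →
    ∀ (f : Fin n → ℝ → ℝ≥0∞), (∀ i, Measurable (f i)) →
    ∫⁻ x, ∏ i, f i (x i) ∂(Measure.pi μ) = ∏ i, ∫⁻ x, f i x ∂(μ i)
  | 0, μ, hμ, f, hf => by simp
  | (n+1), μ, hμ, f, hf => by
    haveI := hμ
    have key := MeasurePreserving.lintegral_map_equiv
      (μ := Measure.pi μ)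
      (fun z : ℝ × (Fin n → ℝ) => f 0 z.1 * ∏ j : Fin n, f (Fin.succ j) (z.2 j))
      (MeasurableEquiv.piFinSuccAbove (fun _ => ℝ) 0)
      (measurePreserving_piFinSuccAbove μ 0)
    have heq : ∀ x : Fin (n+1) → ℝ,
        (f 0 ((MeasurableEquiv.piFinSuccAbove (fun _ => ℝ) 0 x).1)
          * ∏ j : Fin n, f (Fin.succ j) ((MeasurableEquiv.piFinSuccAbove (fun _ => ℝ) 0 x).2 j))
        = ∏ i, f i (x i) := by
      intro x
      rw [Fin.prod_univ_succ]
      congr 1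
    simp only [heq] at key
    rw [← key]
    have hg : Measurable fun v : Fin n → ℝ => ∏ j : Fin n, f (Fin.succ j) (v j) :=
      Finset.measurable_prod _ fun j _ => (hf _).comp (measurable_pi_apply j)
    refine (lintegral_prod_mul (hf 0).aemeasurable hg.aemeasurable).trans ?_
    rw [Fin.prod_univ_succ]
    congr 1
    have h2 := aux_lintegral_pi_prod n (fun j => μ ((0 : Fin (n+1)).succAbove j))
      (fun j => hμ _) (fun j => f (Fin.succ j)) (fun j => hf _)
    refine h2.trans ?_
    exact Finset.prod_congr rfl fun j _ => by simp [Fin.zero_succAbove]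

/-- Gaussian square-exponential moment bound. -/
lemma aux_gauss_exp_sq_le {t : ℝ} (ht0 : 0 ≤ t) (ht : t ≤ 1/4) :
    ∫⁻ y : ℝ, ENNReal.ofReal (Real.exp (t * y ^ 2)) ∂(gaussianReal 0 1)
      ≤ ENNReal.ofReal (Real.exp (2 * t)) := by
  have hb : (0:ℝ) < 1/2 - t := by linarith
  rw [gaussianReal_of_var_ne_zero _ one_ne_zero,
    lintegral_withDensity_eq_lintegral_mul _ (measurable_gaussianPDF 0 1)
      (by measurability)]
  have heq : ∀ y : ℝ, (gaussianPDF 0 1 y) * ENNReal.ofReal (Real.exp (t * y^2))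
      = ENNReal.ofReal ((Real.sqrt (2*Real.pi))⁻¹ * Real.exp (-(1/2 - t) * y^2)) := by
    intro y
    rw [gaussianPDF, ← ENNReal.ofReal_mul (gaussianPDFReal_nonneg _ _ _)]
    congr 1
    rw [gaussianPDFReal]
    push_cast
    rw [mul_one, mul_assoc, ← Real.exp_add]
    congr 2
    ring
  simp only [Pi.mul_apply]
  simp_rw [heq]
  rw [← ofReal_integral_eq_lintegral_ofReal
    (((integrable_exp_neg_mul_sq hb).const_mul _))
    (ae_of_all _ fun y => by positivity)]
  rw [integral_const_mul, integral_gaussian]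
  apply ENNReal.ofReal_le_ofReal
  have hπ : Real.pi ≠ 0 := Real.pi_ne_zero
  have h2t : (1:ℝ)/2 - t ≠ 0 := ne_of_gt hb
  have hL : (Real.sqrt (2*Real.pi))⁻¹ * Real.sqrt (Real.pi / (1/2 - t))
      = Real.sqrt ((2*Real.pi)⁻¹ * (Real.pi / (1/2 - t))) := by
    rw [← Real.sqrt_inv, ← Real.sqrt_mul (by positivity)]
  rw [hL]
  have hcancel : (2*Real.pi)⁻¹ * (Real.pi / (1/2 - t)) = (2 * (1/2 - t))⁻¹ := by
    rw [mul_inv, mul_inv, div_eq_mul_inv]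
    calc (2:ℝ)⁻¹ * Real.pi⁻¹ * (Real.pi * (1/2 - t)⁻¹)
        = (Real.pi⁻¹ * Real.pi) * ((2:ℝ)⁻¹ * (1/2 - t)⁻¹) := by ring
      _ = (2:ℝ)⁻¹ * (1/2 - t)⁻¹ := by rw [inv_mul_cancel₀ hπ, one_mul]
  rw [hcancel]
  have hexp : Real.exp (2*t) = Real.sqrt (Real.exp (4*t)) := by
    rw [show (4:ℝ)*t = 2*t + 2*t by ring, Real.exp_add, Real.sqrt_mul_self (Real.exp_pos _).le]
  rw [hexp]
  apply Real.sqrt_le_sqrt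
  have h1 : 1 + 4*t ≤ Real.exp (4*t) := by
    have := Real.add_one_le_exp (4*t)
    linarith
  rw [← one_div, div_le_iff₀ (by positivity)]
  nlinarith [mul_le_mul_of_nonneg_right h1 (by linarith : (0:ℝ) ≤ 2*(1/2 - t))]

/-- Lemma C.1 (first part): uniform-in-`N` bound on Gaussian integrals of
square-exponentials. -/
theorem gaussian_exp_moment_uniform
    (b : ℕ → ℝ) (hbpos : ∀ j, 0 < b j) (hb2 : Summable fun j => b j ^ 2)
    (α τ : ℝ) (hα : 0 < α) (hτ0 : 0 < τ) (hτ2 : τ < 2) :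
    ∃ δ : ℝ, 0 < δ ∧ ∀ N : ℕ,
      ∫⁻ y, ENNReal.ofReal
          (Real.exp (α * (∑ j : Fin N, b j.val ^ 2 * y j ^ 2) ^ (τ / 2)))
        ∂gammaFin N ≤ ENNReal.ofReal δ := by
  set B := ∑' j, b j ^ 2 with hBdef
  have hBpos : 0 < B := Summable.tsum_pos hb2 (fun i => sq_nonneg _) 0 (pow_pos (hbpos 0) 2)
  have hble : ∀ j, b j ^ 2 ≤ B := fun j => Summable.le_tsum hb2 j fun i _ => sq_nonneg _
  set ε := 1 / (4 * B) with hεdef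
  have hεpos : 0 < ε := by positivity
  have hτ2' : (0:ℝ) < 2 - τ := by linarith
  set M := max 1 ((α / ε) ^ (2 / (2 - τ))) with hMdef
  have hM1 : (1:ℝ) ≤ M := le_max_left _ _
  have hMpos : (0:ℝ) < M := lt_of_lt_of_le one_pos hM1
  have hkey : α * M ^ (τ/2 - 1) ≤ ε := by
    have h1 : α / ε ≤ M ^ (1 - τ/2) := by
      have hαε : (0:ℝ) ≤ α / ε := by positivity
      have hpow : ((α/ε) ^ (2/(2-τ))) ^ (1 - τ/2) = α/ε := by
        rw [← Real.rpow_mul hαε]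
        rw [show 2/(2-τ) * (1 - τ/2) = 1 by field_simp]
        exact Real.rpow_one _
      calc α/ε = ((α/ε) ^ (2/(2-τ))) ^ (1 - τ/2) := hpow.symm
        _ ≤ M ^ (1 - τ/2) :=
            Real.rpow_le_rpow (Real.rpow_nonneg hαε _) (le_max_right _ _) (by linarith)
    have hMe : (0:ℝ) < M ^ (1 - τ/2) := Real.rpow_pos_of_pos hMpos _
    have h2 : M ^ (τ/2 - 1) = (M ^ (1 - τ/2))⁻¹ := by
      rw [show τ/2 - 1 = -(1 - τ/2) by ring, Real.rpow_neg hMpos.le]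
    rw [h2, ← div_eq_mul_inv, div_le_iff₀ hMe]
    calc α = ε * (α/ε) := by field_simp
      _ ≤ ε * M ^ (1 - τ/2) := mul_le_mul_of_nonneg_left h1 hεpos.le
  have hpt : ∀ s : ℝ, 0 ≤ s → s ^ (τ/2) ≤ M ^ (τ/2) + M ^ (τ/2 - 1) * s := by
    intro s hs
    have hnn : 0 ≤ M ^ (τ/2 - 1) * s :=
      mul_nonneg (Real.rpow_nonneg hMpos.le _) hs
    rcases le_total s M with h | h
    · have h1 : s ^ (τ/2) ≤ M ^ (τ/2) := Real.rpow_le_rpow hs h (by linarith)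
      linarith
    · have hspos : 0 < s := lt_of_lt_of_le hMpos h
      have h1 : s ^ (τ/2) = s ^ (τ/2 - 1) * s := by
        rw [← Real.rpow_add_one hspos.ne' (τ/2 - 1)]
        congr 1
        ring
      have h2 : s ^ (τ/2 - 1) ≤ M ^ (τ/2 - 1) :=
        Real.rpow_le_rpow_of_nonpos hMpos h (by linarith)
      have h3 : s ^ (τ/2) ≤ M ^ (τ/2 - 1) * s := by
        rw [h1]; exact mul_le_mul_of_nonneg_right h2 hspos.le
      have h4 : (0:ℝ) ≤ M ^ (τ/2) := Real.rpow_nonneg hMpos.le _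
      linarith
  refine ⟨Real.exp (α * M ^ (τ/2) + 2 * ε * B), Real.exp_pos _, fun N => ?_⟩
  set S : (Fin N → ℝ) → ℝ := fun y => ∑ j : Fin N, b j.val ^ 2 * y j ^ 2 with hSdef
  have hSnn : ∀ y, 0 ≤ S y := fun y => Finset.sum_nonneg fun j _ => by positivity
  -- pointwise bound
  have hmono : ∀ y : Fin N → ℝ,
      ENNReal.ofReal (Real.exp (α * (S y) ^ (τ/2)))
        ≤ ENNReal.ofReal (Real.exp (α * M ^ (τ/2)))
          * ∏ j : Fin N, ENNReal.ofReal (Real.exp ((ε * b j.val ^ 2) * (y j) ^ 2)) := by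
    intro y
    rw [← ENNReal.ofReal_prod_of_nonneg (fun i _ => (Real.exp_pos _).le),
      ← ENNReal.ofReal_mul (Real.exp_pos _).le]
    apply ENNReal.ofReal_le_ofReal
    rw [← Real.exp_sum, ← Real.exp_add]
    apply Real.exp_le_exp.mpr
    have hsum : ∑ j : Fin N, (ε * b j.val ^ 2) * (y j) ^ 2 = ε * S y := by
      rw [hSdef, Finset.mul_sum]
      exact Finset.sum_congr rfl fun j _ => by ring
    rw [hsum]
    have h1 := mul_le_mul_of_nonneg_left (hpt (S y) (hSnn y)) hα.le
    have h2 : α * M ^ (τ/2 - 1) * S y ≤ ε * S y :=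
      mul_le_mul_of_nonneg_right hkey (hSnn y)
    nlinarith
  calc ∫⁻ y, ENNReal.ofReal (Real.exp (α * (∑ j : Fin N, b j.val ^ 2 * y j ^ 2) ^ (τ / 2)))
        ∂gammaFin N
      ≤ ∫⁻ y, ENNReal.ofReal (Real.exp (α * M ^ (τ/2)))
          * ∏ j : Fin N, ENNReal.ofReal (Real.exp ((ε * b j.val ^ 2) * (y j) ^ 2))
        ∂gammaFin N := lintegral_mono fun y => hmono y
    _ = ENNReal.ofReal (Real.exp (α * M ^ (τ/2)))
          * ∫⁻ y, ∏ j : Fin N, ENNReal.ofReal (Real.exp ((ε * b j.val ^ 2) * (y j) ^ 2))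
        ∂gammaFin N := by
        rw [lintegral_const_mul]
        exact Finset.measurable_prod Finset.univ fun j _ =>
          (((measurable_pi_apply j).pow_const 2).const_mul _).exp.ennreal_ofReal
    _ = ENNReal.ofReal (Real.exp (α * M ^ (τ/2)))
          * ∏ j : Fin N, ∫⁻ t : ℝ, ENNReal.ofReal (Real.exp ((ε * b j.val ^ 2) * t ^ 2))
        ∂(gaussianReal 0 1) := by
        congr 1
        exact aux_lintegral_pi_prod N (fun _ => gaussianReal 0 1)
          (fun _ => inferInstance)
          (fun j => fun t => ENNReal.ofReal (Real.exp ((ε * b j.val ^ 2) * t ^ 2)))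
          (fun j => ((measurable_id.pow_const 2).const_mul _).exp.ennreal_ofReal)
    _ ≤ ENNReal.ofReal (Real.exp (α * M ^ (τ/2)))
          * ∏ j : Fin N, ENNReal.ofReal (Real.exp (2 * (ε * b j.val ^ 2))) := by
        apply mul_le_mul_right
        apply Finset.prod_le_prod' fun j _ => ?_
        apply aux_gauss_exp_sq_le (by positivity)
        calc ε * b j.val ^ 2 ≤ ε * B := mul_le_mul_of_nonneg_left (hble _) hεpos.le
          _ = 1/4 := by rw [hεdef]; field_simp
    _ ≤ ENNReal.ofReal (Real.exp (α * M ^ (τ/2) + 2 * ε * B)) := by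
        rw [← ENNReal.ofReal_prod_of_nonneg (fun i _ => (Real.exp_pos _).le),
          ← ENNReal.ofReal_mul (Real.exp_pos _).le]
        apply ENNReal.ofReal_le_ofReal
        rw [← Real.exp_sum, ← Real.exp_add]
        apply Real.exp_le_exp.mpr
        have hsle : ∑ j : Fin N, b j.val ^ 2 ≤ B := by
          rw [hBdef]
          calc ∑ j : Fin N, b j.val ^ 2 = ∑ j ∈ Finset.range N, b j ^ 2 :=
                Fin.sum_univ_eq_sum_range (fun i => b i ^ 2) N
            _ ≤ B := Summable.sum_le_tsum _ (fun i _ => sq_nonneg _) hb2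
        have : ∑ j : Fin N, 2 * (ε * b j.val ^ 2) = 2 * ε * ∑ j : Fin N, b j.val ^ 2 := by
          rw [Finset.mul_sum]
          exact Finset.sum_congr rfl fun j _ => by ring
        rw [this]
        have : 2 * ε * ∑ j : Fin N, b j.val ^ 2 ≤ 2 * ε * B :=
          mul_le_mul_of_nonneg_left hsle (by positivity)
        linarith

end
end

section
/- Let b = (b_j)_{j∈ℕ} ∈ ℓ²(ℕ) have positive entries, let α ∈ (0,∞) and τ ∈ (0,2). Then ∑_{j∈ℕ} b_j² y_j² < ∞ for γ-almost every y ∈ ℝ^∞, and the γ-a.e. defined function y ↦ exp(α (∑_{j∈ℕ} b_j² y_j²)^{τ/2}) belongs to L²_γ(ℝ^∞), i.e., ∫_{ℝ^∞} exp(2α (∑_{j∈ℕ} b_j² y_j²)^{τ/2}) γ(dy) < ∞. -/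
open MeasureTheory ProbabilityTheory Filter
open scoped ENNReal NNReal

noncomputable section

/-- `γ` is the countable product `⨂_{j∈ℕ} N(0,1)` of standard Gaussian measures on `ℝ^∞`,
characterized by its finite-dimensional projections. -/
def IsGaussianProduct (γ : Measure (ℕ → ℝ)) : Prop :=
  IsProbabilityMeasure γ ∧
    ∀ N : ℕ, γ.map (fun y (i : Fin N) => y i.val) = gammaFin N

namespace GaussAux

lemma lintegral_pi_prod {n : ℕ} (μ : Measure ℝ) [SigmaFinite μ] (f : Fin n → ℝ → ℝ≥0∞)
    (hf : ∀ i, Measurable (f i)) :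
    ∫⁻ x : Fin n → ℝ, ∏ i, f i (x i) ∂(Measure.pi fun _ => μ) = ∏ i, ∫⁻ x, f i x ∂μ := by
  induction n with
  | zero => simp
  | succ n ih =>
    have hg := (measurePreserving_piFinSuccAbove (fun _ : Fin (n+1) => μ) 0)
    rw [(hg.symm _).lintegral_map_equiv (fun x : Fin (n+1) → ℝ => ∏ i, f i (x i))
      (MeasurableEquiv.piFinSuccAbove (fun _ => ℝ) 0).symm]
    simp only [MeasurableEquiv.piFinSuccAbove_symm_apply, Fin.insertNthEquiv,
      Equiv.coe_fn_mk, Fin.insertNth_zero, Fin.prod_univ_succ, Fin.cons_zero, Fin.cons_succ, Fin.zero_succAbove, cast_eq]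
    rw [lintegral_prod_mul (f := fun t => f 0 t)
        (g := fun v : Fin n → ℝ => ∏ i : Fin n, f i.succ (v i)) (hf 0).aemeasurable
        (Finset.measurable_prod Finset.univ fun (i : Fin n) _ =>
          (hf i.succ).comp (measurable_pi_apply i)).aemeasurable,
      ih (fun i => f i.succ) (fun i => hf i.succ)]

lemma lintegral_pi_eval {n : ℕ} (μ : Measure ℝ) [IsProbabilityMeasure μ] (k : Fin n)
    (h : ℝ → ℝ≥0∞) (hh : Measurable h) :
    ∫⁻ x : Fin n → ℝ, h (x k) ∂(Measure.pi fun _ => μ) = ∫⁻ t, h t ∂μ := by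
  have key := lintegral_pi_prod μ (fun i => if i = k then h else fun _ => 1)
    (fun i => by split <;> [exact hh; exact measurable_const])
  have e1 : ∀ x : Fin n → ℝ,
      (∏ i, (if i = k then h else fun _ => (1:ℝ≥0∞)) (x i)) = h (x k) := by
    intro x
    rw [Finset.prod_eq_single k]
    · simp
    · intro i _ hik; simp [hik]
    · simp
  have e2 : (∏ i, ∫⁻ t, (if i = k then h else fun _ => (1:ℝ≥0∞)) t ∂μ) = ∫⁻ t, h t ∂μ := by
    rw [Finset.prod_eq_single k]
    · simp
    · intro i _ hik; simp [hik]
    · simp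
  rw [← e2, ← key]
  exact lintegral_congr fun x => by rw [e1]

lemma lintegral_exp_sq_gaussian {c : ℝ} (hc0 : 0 ≤ c) (hc : c < 1/2) :
    ∫⁻ x, ENNReal.ofReal (Real.exp (c * x ^ 2)) ∂(gaussianReal 0 1)
      = ENNReal.ofReal ((Real.sqrt (2 * Real.pi))⁻¹ * Real.sqrt (Real.pi / (1/2 - c))) := by
  have hpos : (0:ℝ) < 1/2 - c := by linarith
  have hmeas : Measurable fun x : ℝ => ENNReal.ofReal (Real.exp (c * x ^ 2)) := by
    measurability
  rw [gaussianReal_of_var_ne_zero 0 one_ne_zero,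
    lintegral_withDensity_eq_lintegral_mul _ (measurable_gaussianPDF 0 1) hmeas]
  have heq : ∀ x : ℝ, (gaussianPDF 0 1 * fun x => ENNReal.ofReal (Real.exp (c * x ^ 2))) x
      = ENNReal.ofReal ((Real.sqrt (2 * Real.pi))⁻¹ * Real.exp (-(1/2 - c) * x ^ 2)) := by
    intro x
    simp only [Pi.mul_apply, gaussianPDF, ← ENNReal.ofReal_mul (gaussianPDFReal_nonneg 0 1 x)]
    congr 1
    rw [gaussianPDFReal]
    simp only [NNReal.coe_one, mul_one, sub_zero]
    rw [mul_assoc, ← Real.exp_add]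
    congr 1
    ring
  simp_rw [heq]
  rw [← ofReal_integral_eq_lintegral_ofReal
    ((integrable_exp_neg_mul_sq hpos).const_mul _)
    (Filter.Eventually.of_forall fun x => by positivity),
    integral_const_mul, integral_gaussian]

lemma gauss_factor_le {c : ℝ} (hc0 : 0 ≤ c) (hc : c ≤ 1/4) :
    ∫⁻ x, ENNReal.ofReal (Real.exp (c * x ^ 2)) ∂(gaussianReal 0 1)
      ≤ ENNReal.ofReal (Real.exp (2 * c)) := by
  rw [lintegral_exp_sq_gaussian hc0 (by linarith)]
  apply ENNReal.ofReal_le_ofReal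
  have hpos : (0:ℝ) < 1/2 - c := by linarith
  have hpi : (0:ℝ) < Real.pi := Real.pi_pos
  have h1 : (Real.sqrt (2 * Real.pi))⁻¹ * Real.sqrt (Real.pi / (1/2 - c))
      = Real.sqrt (1 / (1 - 2*c)) := by
    rw [← Real.sqrt_inv, ← Real.sqrt_mul (by positivity)]
    congr 1
    have hpi' : Real.pi ≠ 0 := hpi.ne'
    have h12 : (1/2 - c) ≠ 0 := hpos.ne'
    have h12' : (1 - 2*c) ≠ 0 := by intro h; apply h12; linarith [h]
    rw [eq_div_iff h12']
    field_simp
  rw [h1]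
  have h2 : 1 / (1 - 2*c) ≤ Real.exp (2*c) ^ 2 := by
    rw [sq, ← Real.exp_add]
    have h3 := Real.add_one_le_exp (2*c + 2*c)
    rw [div_le_iff₀ (by linarith)]
    nlinarith [h3, Real.exp_nonneg (2*c + 2*c)]
  calc Real.sqrt (1/(1-2*c)) ≤ Real.sqrt (Real.exp (2*c) ^ 2) := Real.sqrt_le_sqrt h2
    _ = Real.exp (2*c) := Real.sqrt_sq (Real.exp_nonneg _)

lemma finN {N : ℕ} (c : ℕ → ℝ) (hc0 : ∀ j, 0 ≤ c j) (hc : ∀ j, c j ≤ 1/4) :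
    ∫⁻ x : Fin N → ℝ, ENNReal.ofReal (Real.exp (∑ i : Fin N, c i.val * (x i) ^ 2)) ∂gammaFin N
      ≤ ENNReal.ofReal (Real.exp (2 * ∑ i : Fin N, c i.val)) := by
  have heq : ∀ x : Fin N → ℝ, ENNReal.ofReal (Real.exp (∑ i : Fin N, c i.val * (x i) ^ 2))
      = ∏ i : Fin N, ENNReal.ofReal (Real.exp (c i.val * (x i) ^ 2)) := by
    intro x
    rw [Real.exp_sum, ENNReal.ofReal_prod_of_nonneg (fun i _ => (Real.exp_pos _).le)]
  simp_rw [heq]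
  rw [gammaFin, lintegral_pi_prod _ (fun i t => ENNReal.ofReal (Real.exp (c i.val * t ^ 2)))
    (fun i => by measurability)]
  calc ∏ i : Fin N, ∫⁻ t, ENNReal.ofReal (Real.exp (c i.val * t ^ 2)) ∂(gaussianReal 0 1)
      ≤ ∏ i : Fin N, ENNReal.ofReal (Real.exp (2 * c i.val)) :=
        Finset.prod_le_prod' fun i _ => gauss_factor_le (hc0 _) (hc _)
    _ = ENNReal.ofReal (Real.exp (2 * ∑ i : Fin N, c i.val)) := by
        rw [← ENNReal.ofReal_prod_of_nonneg (fun i _ => (Real.exp_pos _).le), ← Real.exp_sum,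
          Finset.mul_sum]

lemma young {α τ : ℝ} (hα : 0 < α) (hτ0 : 0 < τ) (hτ2 : τ < 2) {ε : ℝ} (hε : 0 < ε) :
    ∃ C : ℝ, ∀ s : ℝ, 0 ≤ s → 2 * α * s ^ (τ / 2) ≤ C + ε * s := by
  set t := τ / 2 with ht
  have ht0 : 0 < t := by positivity
  have ht1 : t < 1 := by rw [ht]; linarith
  set lam := min 1 ((ε / (2 * α)) ^ (1 / (1 - t))) with hlam
  have hlam0 : 0 < lam := lt_min one_pos (Real.rpow_pos_of_pos (by positivity) _)
  have hcoef : 2 * α * lam ^ (1 - t) ≤ ε := by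
    have hle : lam ≤ (ε / (2 * α)) ^ (1 / (1 - t)) := min_le_right _ _
    have h2 : lam ^ (1 - t) ≤ ((ε / (2 * α)) ^ (1 / (1 - t))) ^ (1 - t) :=
      Real.rpow_le_rpow hlam0.le hle (by linarith)
    have hne : (1:ℝ) - t ≠ 0 := by intro h; nlinarith
    have h3 : ((ε / (2 * α)) ^ (1 / (1 - t))) ^ (1 - t) = ε / (2 * α) := by
      rw [← Real.rpow_mul (by positivity), one_div, inv_mul_cancel₀ hne, Real.rpow_one]
    rw [h3] at h2
    calc 2 * α * lam ^ (1 - t) ≤ 2 * α * (ε / (2 * α)) :=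
          mul_le_mul_of_nonneg_left h2 (by positivity)
      _ = ε := by field_simp
  refine ⟨2 * α * lam ^ (-t), fun s hs => ?_⟩
  have key : s ^ t ≤ lam ^ (-t) + lam ^ (1 - t) * s := by
    have h1 : (lam * s) ^ t ≤ 1 + lam * s := by
      rcases le_total (lam * s) 1 with h | h
      · calc (lam*s) ^ t ≤ 1 := Real.rpow_le_one (by positivity) h ht0.le
          _ ≤ 1 + lam * s := by nlinarith
      · calc (lam*s) ^ t ≤ (lam*s) ^ (1:ℝ) :=
            Real.rpow_le_rpow_of_exponent_le h ht1.le
          _ = lam * s := Real.rpow_one _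
          _ ≤ 1 + lam * s := by linarith
    have h2 : s ^ t = lam ^ (-t) * (lam * s) ^ t := by
      rw [Real.mul_rpow hlam0.le hs, ← mul_assoc, ← Real.rpow_add hlam0, neg_add_cancel,
        Real.rpow_zero, one_mul]
    have h4 : lam ^ (-t) * lam = lam ^ (1 - t) := by
      rw [show (1:ℝ) - t = -t + 1 by ring, Real.rpow_add hlam0, Real.rpow_one]
    rw [h2]
    calc lam ^ (-t) * (lam * s) ^ t ≤ lam ^ (-t) * (1 + lam * s) :=
          mul_le_mul_of_nonneg_left h1 (Real.rpow_nonneg hlam0.le _)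
      _ = lam ^ (-t) + lam ^ (-t) * lam * s := by ring
      _ = lam ^ (-t) + lam ^ (1-t) * s := by rw [h4]
  have hmul := mul_le_mul_of_nonneg_left key (by positivity : (0:ℝ) ≤ 2 * α)
  have hfin : 2 * α * (lam ^ (1 - t) * s) ≤ ε * s :=
    by nlinarith [mul_le_mul_of_nonneg_right hcoef hs]
  nlinarith [hmul, hfin]

end GaussAux

/-- Lemma C.1 (second part): the square-exponential
`y ↦ exp(α (∑_j b_j² y_j²)^{τ/2})` is in `L²_γ(ℝ^∞)`. -/
theorem gaussian_exp_moment_infinite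
    (b : ℕ → ℝ) (hbpos : ∀ j, 0 < b j) (hb2 : Summable fun j => b j ^ 2)
    (α τ : ℝ) (hα : 0 < α) (hτ0 : 0 < τ) (hτ2 : τ < 2)
    (γ : Measure (ℕ → ℝ)) (hγ : IsGaussianProduct γ) :
    (∀ᵐ y ∂γ, Summable fun j => b j ^ 2 * y j ^ 2) ∧
    ∫⁻ y, ENNReal.ofReal
        (Real.exp (2 * α * (∑' j, b j ^ 2 * y j ^ 2) ^ (τ / 2))) ∂γ < ⊤ := by
  obtain ⟨hprob, hmap⟩ := hγ
  have hπ : ∀ N : ℕ, Measurable (fun y : ℕ → ℝ => fun i : Fin N => y i.val) :=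
    fun N => measurable_pi_lambda _ fun i => measurable_pi_apply _
  set S : (ℕ → ℝ) → ℝ≥0∞ := fun y => ∑' j, ENNReal.ofReal (b j ^ 2 * y j ^ 2) with hSdef
  have hmeasg : ∀ j, Measurable fun y : ℕ → ℝ => ENNReal.ofReal (b j ^ 2 * y j ^ 2) := by
    intro j
    exact (((measurable_pi_apply j).pow_const 2).const_mul _).ennreal_ofReal
  have hSmeas : Measurable S := Measurable.ennreal_tsum hmeasg
  -- second moment of each coordinate
  have hcoord : ∀ j : ℕ, ∫⁻ y, ENNReal.ofReal (y j ^ 2) ∂γ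
      ≤ 4 * ENNReal.ofReal (Real.exp (2 * (1/4))) := by
    intro j
    have hm : Measurable fun x : Fin (j+1) → ℝ =>
        ENNReal.ofReal ((x ⟨j, Nat.lt_succ_self j⟩) ^ 2) :=
      (((measurable_pi_apply _).pow_const 2)).ennreal_ofReal
    have h1 : ∫⁻ y, ENNReal.ofReal (y j ^ 2) ∂γ
        = ∫⁻ x : Fin (j+1) → ℝ, ENNReal.ofReal ((x ⟨j, Nat.lt_succ_self j⟩) ^ 2)
            ∂gammaFin (j+1) := by
      rw [← hmap (j+1), lintegral_map hm (hπ (j+1))]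
    rw [h1, gammaFin, GaussAux.lintegral_pi_eval (gaussianReal 0 1) ⟨j, Nat.lt_succ_self j⟩
      (fun t => ENNReal.ofReal (t ^ 2)) (measurable_id.pow_const 2).ennreal_ofReal]
    calc ∫⁻ t, ENNReal.ofReal (t ^ 2) ∂(gaussianReal 0 1)
        ≤ ∫⁻ t, 4 * ENNReal.ofReal (Real.exp ((1/4) * t ^ 2)) ∂(gaussianReal 0 1) := by
          apply lintegral_mono fun t => ?_
          rw [show (4:ℝ≥0∞) = ENNReal.ofReal 4 by norm_num,
            ← ENNReal.ofReal_mul (by norm_num)]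
          apply ENNReal.ofReal_le_ofReal
          nlinarith [Real.add_one_le_exp ((1/4) * t ^ 2)]
      _ = 4 * ∫⁻ t, ENNReal.ofReal (Real.exp ((1/4) * t ^ 2)) ∂(gaussianReal 0 1) :=
          lintegral_const_mul _ (((measurable_id.pow_const 2).const_mul _).exp.ennreal_ofReal)
      _ ≤ 4 * ENNReal.ofReal (Real.exp (2 * (1/4))) :=
          mul_le_mul_right (GaussAux.gauss_factor_le (by norm_num) (by norm_num)) _
  -- the expected value of S is finite
  have hK : ∫⁻ y, S y ∂γ
      ≤ (∑' j, ENNReal.ofReal (b j ^ 2)) * (4 * ENNReal.ofReal (Real.exp (2 * (1/4)))) := by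
    rw [hSdef]
    simp only
    rw [lintegral_tsum (fun j => (hmeasg j).aemeasurable)]
    calc ∑' j, ∫⁻ y, ENNReal.ofReal (b j ^ 2 * y j ^ 2) ∂γ
        ≤ ∑' j, ENNReal.ofReal (b j ^ 2) * (4 * ENNReal.ofReal (Real.exp (2 * (1/4)))) := by
          apply ENNReal.tsum_le_tsum fun j => ?_
          have he : ∀ y : ℕ → ℝ, ENNReal.ofReal (b j ^ 2 * y j ^ 2)
              = ENNReal.ofReal (b j ^ 2) * ENNReal.ofReal (y j ^ 2) := fun y =>
            ENNReal.ofReal_mul (sq_nonneg _)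
          simp_rw [he]
          rw [lintegral_const_mul _ ((measurable_pi_apply j).pow_const 2).ennreal_ofReal]
          exact mul_le_mul_right (hcoord j) _
      _ = _ := ENNReal.tsum_mul_right
  have hfin : (∑' j, ENNReal.ofReal (b j ^ 2)) ≠ ⊤ := by
    rw [← ENNReal.ofReal_tsum_of_nonneg (fun j => sq_nonneg _) hb2]
    exact ENNReal.ofReal_ne_top
  have hSfin : ∀ᵐ y ∂γ, S y < ⊤ := by
    apply ae_lt_top hSmeas
    exact ne_top_of_le_ne_top (ENNReal.mul_ne_top hfin
      (ENNReal.mul_ne_top (by norm_num) ENNReal.ofReal_ne_top)) hK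
  have hae : ∀ᵐ y ∂γ, (Summable fun j => b j ^ 2 * y j ^ 2)
      ∧ (∑' j, b j ^ 2 * y j ^ 2) = (S y).toReal := by
    filter_upwards [hSfin] with y hy
    have hne : ∀ j, ENNReal.ofReal (b j ^ 2 * y j ^ 2) ≠ ⊤ := fun j => ENNReal.ofReal_ne_top
    have hsum : Summable fun j => (ENNReal.ofReal (b j ^ 2 * y j ^ 2)).toReal :=
      ENNReal.summable_toReal hy.ne
    have hnn : ∀ j, (ENNReal.ofReal (b j ^ 2 * y j ^ 2)).toReal = b j ^ 2 * y j ^ 2 := fun j =>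
      ENNReal.toReal_ofReal (by positivity)
    refine ⟨hsum.congr fun j => hnn j, ?_⟩
    rw [hSdef]
    simp only
    rw [ENNReal.tsum_toReal_eq hne]
    exact tsum_congr fun j => (hnn j).symm
  refine ⟨hae.mono fun y hy => hy.1, ?_⟩
  -- choice of ε
  set B := ∑' j, b j ^ 2 with hB
  have hB0 : 0 < B := lt_of_lt_of_le (pow_pos (hbpos 0) 2)
    (hb2.le_tsum 0 fun i _ => sq_nonneg _)
  set ε := 1 / (8 * B) with hεdef
  have hε : 0 < ε := by positivity
  have hεb : ∀ j, 0 ≤ ε * b j ^ 2 ∧ ε * b j ^ 2 ≤ 1/4 := by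
    intro j
    refine ⟨by positivity, ?_⟩
    have h1 : b j ^ 2 ≤ B := hb2.le_tsum j fun i _ => sq_nonneg _
    calc ε * b j ^ 2 ≤ ε * B := mul_le_mul_of_nonneg_left h1 hε.le
      _ = 1/8 := by rw [hεdef]; field_simp
      _ ≤ 1/4 := by norm_num
  obtain ⟨C, hC⟩ := GaussAux.young hα hτ0 hτ2 hε
  -- partial sums
  set P : ℕ → (ℕ → ℝ) → ℝ := fun N y => ∑ j ∈ Finset.range N, b j ^ 2 * y j ^ 2 with hPdef
  have hPmeas : ∀ N, Measurable (P N) := fun N =>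
    Finset.measurable_sum _ fun j _ => ((measurable_pi_apply j).pow_const 2).const_mul _
  set F : ℕ → (ℕ → ℝ) → ℝ≥0∞ := fun N y => ENNReal.ofReal (Real.exp (ε * P N y)) with hFdef
  have hFmeas : ∀ N, Measurable (F N) := fun N =>
    (((hPmeas N).const_mul ε).exp).ennreal_ofReal
  have hFbound : ∀ N, ∫⁻ y, F N y ∂γ ≤ ENNReal.ofReal (Real.exp (2 * (ε * B))) := by
    intro N
    have h1 : ∀ y : ℕ → ℝ, F N y = (fun x : Fin N → ℝ =>
        ENNReal.ofReal (Real.exp (∑ i : Fin N, (ε * b i.val ^ 2) * (x i) ^ 2)))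
        (fun i : Fin N => y i.val) := by
      intro y
      rw [hFdef]
      simp only
      congr 2
      rw [hPdef]
      simp only
      rw [Finset.mul_sum, ← Fin.sum_univ_eq_sum_range (fun j => ε * (b j ^ 2 * y j ^ 2)) N]
      exact Finset.sum_congr rfl fun i _ => by ring
    calc ∫⁻ y, F N y ∂γ
        = ∫⁻ x : Fin N → ℝ,
            ENNReal.ofReal (Real.exp (∑ i : Fin N, (ε * b i.val ^ 2) * (x i) ^ 2))
            ∂gammaFin N := by
          rw [← hmap N, lintegral_map ?_ (hπ N)]
          · exact lintegral_congr fun y => h1 y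
          · exact ((Finset.measurable_sum _ fun i _ =>
              ((measurable_pi_apply i).pow_const 2).const_mul _).exp).ennreal_ofReal
      _ ≤ ENNReal.ofReal (Real.exp (2 * ∑ i : Fin N, (ε * b i.val ^ 2))) :=
          GaussAux.finN (fun j => ε * b j ^ 2) (fun j => (hεb j).1) (fun j => (hεb j).2)
      _ ≤ ENNReal.ofReal (Real.exp (2 * (ε * B))) := by
          apply ENNReal.ofReal_le_ofReal
          apply Real.exp_le_exp.mpr
          have h2 : ∑ i : Fin N, ε * b i.val ^ 2 ≤ ε * B := by
            rw [Fin.sum_univ_eq_sum_range (fun j => ε * b j ^ 2), ← Finset.mul_sum]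
            exact mul_le_mul_of_nonneg_left
              (Summable.sum_le_tsum _ (fun i _ => sq_nonneg _) hb2) hε.le
          linarith
  have hmono : ∀ y, Monotone fun N => F N y := by
    intro y N M hNM
    apply ENNReal.ofReal_le_ofReal
    apply Real.exp_le_exp.mpr
    apply mul_le_mul_of_nonneg_left ?_ hε.le
    exact Finset.sum_le_sum_of_subset_of_nonneg (Finset.range_subset_range.mpr hNM)
      (fun i _ _ => by positivity)
  have htendsto : ∀ᵐ y ∂γ, Tendsto (fun N => F N y) atTop
      (nhds (ENNReal.ofReal (Real.exp (ε * (S y).toReal)))) := by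
    filter_upwards [hae] with y hy
    obtain ⟨hy1, hy2⟩ := hy
    have h1 : Tendsto (fun N => P N y) atTop (nhds ((S y).toReal)) := by
      rw [← hy2]
      exact hy1.hasSum.tendsto_sum_nat
    have h2 : Tendsto (fun N => ε * P N y) atTop (nhds (ε * (S y).toReal)) := h1.const_mul ε
    exact (ENNReal.continuous_ofReal.tendsto _).comp ((Real.continuous_exp.tendsto _).comp h2)
  have hlim := lintegral_tendsto_of_tendsto_of_monotone (fun N => (hFmeas N).aemeasurable)
    (Filter.Eventually.of_forall hmono) htendsto
  have hIbound : ∫⁻ y, ENNReal.ofReal (Real.exp (ε * (S y).toReal)) ∂γ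
      ≤ ENNReal.ofReal (Real.exp (2 * (ε * B))) :=
    le_of_tendsto hlim (Filter.Eventually.of_forall hFbound)
  have hptwise : ∀ᵐ y ∂γ, ENNReal.ofReal (Real.exp (2 * α * (∑' j, b j ^ 2 * y j ^ 2) ^ (τ/2)))
      ≤ ENNReal.ofReal (Real.exp C) * ENNReal.ofReal (Real.exp (ε * (S y).toReal)) := by
    filter_upwards [hae] with y hy
    obtain ⟨hy1, hy2⟩ := hy
    rw [← ENNReal.ofReal_mul (Real.exp_nonneg _), ← Real.exp_add]
    apply ENNReal.ofReal_le_ofReal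
    apply Real.exp_le_exp.mpr
    rw [hy2]
    exact hC _ ENNReal.toReal_nonneg
  calc ∫⁻ y, ENNReal.ofReal (Real.exp (2 * α * (∑' j, b j ^ 2 * y j ^ 2) ^ (τ/2))) ∂γ
      ≤ ∫⁻ y, ENNReal.ofReal (Real.exp C) * ENNReal.ofReal (Real.exp (ε * (S y).toReal)) ∂γ :=
        lintegral_mono_ae hptwise
    _ = ENNReal.ofReal (Real.exp C)
          * ∫⁻ y, ENNReal.ofReal (Real.exp (ε * (S y).toReal)) ∂γ :=
        lintegral_const_mul _ (((hSmeas.ennreal_toReal.const_mul ε)).exp.ennreal_ofReal)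
    _ ≤ ENNReal.ofReal (Real.exp C) * ENNReal.ofReal (Real.exp (2 * (ε * B))) :=
        mul_le_mul_right hIbound _
    _ < ⊤ := ENNReal.mul_lt_top ENNReal.ofReal_lt_top ENNReal.ofReal_lt_top

end
end

section
/- Let t = (t_j)_{j∈ℕ} be a nonnegative sequence in ℓ¹(ℕ) with ‖t‖_{ℓ¹} < 1. Then ∑_{ν∈𝓕} (|ν|^{|ν|}/ν^ν) e^{-|ν|} t^ν ≤ ∑_{ν∈𝓕} (|ν|!/ν!) t^ν = 1/(1 − ‖t‖_{ℓ¹}), where for ν ∈ 𝓕 we write |ν| := ∑_j ν_j, ν! := ∏_j ν_j!, ν^ν := ∏_j ν_j^{ν_j} (with 0⁰ := 1), and t^ν := ∏_j t_j^{ν_j}. -/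
noncomputable section

/-- `|ν| = ∑_j ν_j` for a finitely supported multi-index. -/
def nuAbs (ν : ℕ →₀ ℕ) : ℕ := ν.sum fun _ k => k

/-- `ν! = ∏_j ν_j!`. -/
def nuFact (ν : ℕ →₀ ℕ) : ℕ := ∏ j ∈ ν.support, (ν j).factorial

/-- `ν^ν = ∏_j ν_j^{ν_j}` (with `0⁰ = 1`). -/
def nuSelfPow (ν : ℕ →₀ ℕ) : ℕ := ∏ j ∈ ν.support, (ν j) ^ (ν j)

/-- `t^ν = ∏_j t_j^{ν_j}`. -/
def tPow (t : ℕ → ℝ) (ν : ℕ →₀ ℕ) : ℝ := ∏ j ∈ ν.support, t j ^ ν j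

open Finset ENNReal

lemma nuFact_pos (ν : ℕ →₀ ℕ) : 0 < nuFact ν :=
  Finset.prod_pos fun _ _ => Nat.factorial_pos _

lemma nuSelfPow_pos (ν : ℕ →₀ ℕ) : 0 < nuSelfPow ν :=
  Finset.prod_pos fun _ hj =>
    Nat.pow_pos (Nat.pos_of_ne_zero (Finsupp.mem_support_iff.mp hj))

lemma nuFact_le_nuSelfPow (ν : ℕ →₀ ℕ) : nuFact ν ≤ nuSelfPow ν :=
  Finset.prod_le_prod (fun _ _ => Nat.zero_le _) fun _ _ => Nat.factorial_le_pow _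

lemma pow_mul_exp_neg_le_factorial (n : ℕ) :
    (n : ℝ) ^ n * Real.exp (-(n:ℝ)) ≤ (n.factorial : ℝ) := by
  have h1 : (n : ℝ) ^ n / (n.factorial : ℝ) ≤ Real.exp n := by
    refine le_trans ?_ (Real.sum_le_exp_of_nonneg (Nat.cast_nonneg n) (n + 1))
    exact Finset.single_le_sum (f := fun i => (n:ℝ)^i / (i.factorial : ℝ))
      (fun i _ => by positivity) (Finset.self_mem_range_succ n)
  have hfac : (0:ℝ) < (n.factorial : ℝ) := by exact_mod_cast n.factorial_pos
  have h2 : (n : ℝ) ^ n ≤ Real.exp n * (n.factorial : ℝ) := by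
    rw [div_le_iff₀ hfac] at h1; linarith
  calc (n : ℝ) ^ n * Real.exp (-(n:ℝ))
      ≤ (Real.exp n * (n.factorial : ℝ)) * Real.exp (-(n:ℝ)) :=
        mul_le_mul_of_nonneg_right h2 (Real.exp_nonneg _)
    _ = (n.factorial : ℝ) * Real.exp ((n:ℝ) + -(n:ℝ)) := by rw [Real.exp_add]; ring
    _ = (n.factorial : ℝ) := by simp

lemma tPow_nonneg {t : ℕ → ℝ} (ht : ∀ j, 0 ≤ t j) (ν : ℕ →₀ ℕ) : 0 ≤ tPow t ν :=
  Finset.prod_nonneg fun j _ => pow_nonneg (ht j) _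

lemma term_le {t : ℕ → ℝ} (ht : ∀ j, 0 ≤ t j) (ν : ℕ →₀ ℕ) :
    ((nuAbs ν : ℝ) ^ nuAbs ν / (nuSelfPow ν : ℝ)) * Real.exp (-(nuAbs ν : ℝ)) * tPow t ν
      ≤ (((nuAbs ν).factorial : ℝ) / (nuFact ν : ℝ)) * tPow t ν := by
  refine mul_le_mul_of_nonneg_right ?_ (tPow_nonneg ht ν)
  have h : ((nuAbs ν : ℝ) ^ nuAbs ν / (nuSelfPow ν : ℝ)) * Real.exp (-(nuAbs ν : ℝ))
      = ((nuAbs ν : ℝ) ^ nuAbs ν * Real.exp (-(nuAbs ν : ℝ))) / (nuSelfPow ν : ℝ) := by ring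
  rw [h]
  refine div_le_div₀ (by positivity) (pow_mul_exp_neg_le_factorial _) ?_ ?_
  · exact_mod_cast nuFact_pos ν
  · exact_mod_cast nuFact_le_nuSelfPow ν

lemma nuAbs_eq (ν : ℕ →₀ ℕ) : nuAbs ν = ∑ i ∈ ν.support, ν i := rfl

lemma multinomial_subset {F : Finset ℕ} (ν : ℕ →₀ ℕ) (h : ν.support ⊆ F) :
    Nat.multinomial F ⇑ν = Nat.multinomial ν.support ⇑ν := by
  have h1 : ∑ i ∈ F, ν i = ∑ i ∈ ν.support, ν i :=
    (Finset.sum_subset h fun x _ hx => Finsupp.notMem_support_iff.mp hx).symm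
  have h2 : ∏ i ∈ F, (ν i).factorial = ∏ i ∈ ν.support, (ν i).factorial :=
    (Finset.prod_subset h fun x _ hx => by
      rw [Finsupp.notMem_support_iff.mp hx, Nat.factorial_zero]).symm
  unfold Nat.multinomial
  rw [h1, h2]

/-- The multinomial theorem over `finsuppAntidiag`, in `ℝ≥0∞`. -/
lemma fin_pow (a : ℕ → ℝ≥0∞) (F : Finset ℕ) (n : ℕ) :
    (∑ j ∈ F, a j) ^ n
      = ∑ ν ∈ Finset.finsuppAntidiag F n,
          (Nat.multinomial ν.support ⇑ν : ℝ≥0∞) * ∏ j ∈ ν.support, a j ^ ν j := by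
  rw [Finset.sum_pow_eq_sum_piAntidiag]
  refine (Finset.sum_bij
    (fun (ν : ℕ →₀ ℕ) (_ : ν ∈ Finset.finsuppAntidiag F n) => (⇑ν : ℕ → ℕ))
    ?_ ?_ ?_ ?_).symm
  · intro ν hν
    obtain ⟨hsum, hsupp⟩ := Finset.mem_finsuppAntidiag.mp hν
    exact Finset.mem_piAntidiag.mpr ⟨hsum, fun i hi => hsupp (Finsupp.mem_support_iff.mpr hi)⟩
  · intro ν₁ _ ν₂ _ h
    exact DFunLike.coe_injective h
  · intro k hk
    obtain ⟨hksum, hksupp⟩ := Finset.mem_piAntidiag.mp hk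
    refine ⟨⟨F.filter fun i => k i ≠ 0, k, fun i => ?_⟩, ?_, rfl⟩
    · exact ⟨fun h => (Finset.mem_filter.mp h).2, fun h => Finset.mem_filter.mpr ⟨hksupp i h, h⟩⟩
    · exact Finset.mem_finsuppAntidiag.mpr ⟨hksum, fun i hi => (Finset.mem_filter.mp hi).1⟩
  · intro ν hν
    obtain ⟨hsum, hsupp⟩ := Finset.mem_finsuppAntidiag.mp hν
    rw [multinomial_subset ν hsupp]
    congr 1
    exact Finset.prod_subset hsupp fun x _ hx => by
      rw [Finsupp.notMem_support_iff.mp hx, pow_zero]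

lemma tsum_H (a : ℕ → ℝ≥0∞) (n : ℕ) :
    (∑' ν : ℕ →₀ ℕ, if nuAbs ν = n then
        (Nat.multinomial ν.support ⇑ν : ℝ≥0∞) * ∏ j ∈ ν.support, a j ^ ν j else 0)
      = (∑' j, a j) ^ n := by
  set G : (ℕ →₀ ℕ) → ℝ≥0∞ :=
    fun ν => (Nat.multinomial ν.support ⇑ν : ℝ≥0∞) * ∏ j ∈ ν.support, a j ^ ν j with hG
  have mem_anti : ∀ (F : Finset ℕ) (ν : ℕ →₀ ℕ), ν.support ⊆ F → nuAbs ν = n →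
      ν ∈ Finset.finsuppAntidiag F n := by
    intro F ν hsupp habs
    refine Finset.mem_finsuppAntidiag.mpr ⟨?_, hsupp⟩
    have h1 : F.sum ⇑ν = ∑ i ∈ ν.support, ν i :=
      (Finset.sum_subset hsupp fun x _ hx => Finsupp.notMem_support_iff.mp hx).symm
    exact h1.trans habs
  apply le_antisymm
  · rw [ENNReal.tsum_eq_iSup_sum]
    refine iSup_le fun T => ?_
    set F := T.sup Finsupp.support with hF
    calc ∑ ν ∈ T, (if nuAbs ν = n then G ν else 0)
        = ∑ ν ∈ T.filter fun ν => nuAbs ν = n, G ν := (Finset.sum_filter _ _).symm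
      _ ≤ ∑ ν ∈ Finset.finsuppAntidiag F n, G ν := by
          refine Finset.sum_le_sum_of_subset fun ν hν => ?_
          obtain ⟨hνT, habs⟩ := Finset.mem_filter.mp hν
          exact mem_anti F ν (Finset.le_sup hνT) habs
      _ = (∑ j ∈ F, a j) ^ n := (fin_pow a F n).symm
      _ ≤ (∑' j, a j) ^ n := pow_le_pow_left₀ (zero_le) (ENNReal.sum_le_tsum F) n
  · have hs : HasSum a (∑' j, a j) := ENNReal.summable.hasSum
    have htend : Filter.Tendsto (fun F : Finset ℕ => (∑ j ∈ F, a j) ^ n)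
        Filter.atTop (nhds ((∑' j, a j) ^ n)) :=
      ((ENNReal.continuous_pow n).continuousAt.tendsto.comp hs)
    refine le_of_tendsto htend (Filter.Eventually.of_forall fun F => ?_)
    rw [fin_pow]
    calc ∑ ν ∈ Finset.finsuppAntidiag F n, G ν
        = ∑ ν ∈ Finset.finsuppAntidiag F n, (if nuAbs ν = n then G ν else 0) := by
          refine Finset.sum_congr rfl fun ν hν => ?_
          obtain ⟨hsum, hsupp⟩ := Finset.mem_finsuppAntidiag'.mp hν
          rw [if_pos (show nuAbs ν = n from hsum)]
      _ ≤ _ := ENNReal.sum_le_tsum _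

lemma term_eq {t : ℕ → ℝ} (ht : ∀ j, 0 ≤ t j) (ν : ℕ →₀ ℕ) :
    ENNReal.ofReal ((((nuAbs ν).factorial : ℝ) / (nuFact ν : ℝ)) * tPow t ν)
      = (Nat.multinomial ν.support ⇑ν : ℝ≥0∞)
          * ∏ j ∈ ν.support, ENNReal.ofReal (t j) ^ ν j := by
  have habs : (nuAbs ν).factorial = nuFact ν * Nat.multinomial ν.support ⇑ν := by
    rw [nuAbs_eq]
    exact (Nat.multinomial_spec ν.support ⇑ν).symm
  have hc : (((nuAbs ν).factorial : ℝ) / (nuFact ν : ℝ))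
      = (Nat.multinomial ν.support ⇑ν : ℝ) := by
    rw [habs]
    push_cast
    rw [mul_div_cancel_left₀]
    exact_mod_cast (nuFact_pos ν).ne'
  rw [hc, ENNReal.ofReal_mul (Nat.cast_nonneg _), ENNReal.ofReal_natCast]
  congr 1
  rw [tPow, ENNReal.ofReal_prod_of_nonneg fun i _ => pow_nonneg (ht i) _]
  exact Finset.prod_congr rfl fun j _ => ENNReal.ofReal_pow (ht j) _

/-- The Stirling-type multi-index estimate
`∑_ν (|ν|^{|ν|}/ν^ν) e^{-|ν|} t^ν ≤ ∑_ν (|ν|!/ν!) t^ν = 1/(1 − ‖t‖_{ℓ¹})`. -/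
theorem stirling_multiindex_sum
    (t : ℕ → ℝ) (ht : ∀ j, 0 ≤ t j) (hsum : Summable t) (hlt : ∑' j, t j < 1) :
    (∑' ν : ℕ →₀ ℕ, ENNReal.ofReal
        (((nuAbs ν : ℝ) ^ nuAbs ν / (nuSelfPow ν : ℝ)) * Real.exp (-(nuAbs ν : ℝ)) *
          tPow t ν)
      ≤ ∑' ν : ℕ →₀ ℕ, ENNReal.ofReal
          ((((nuAbs ν).factorial : ℝ) / (nuFact ν : ℝ)) * tPow t ν)) ∧
    ∑' ν : ℕ →₀ ℕ, ENNReal.ofReal ((((nuAbs ν).factorial : ℝ) / (nuFact ν : ℝ)) * tPow t ν)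
      = ENNReal.ofReal (1 / (1 - ∑' j, t j)) := by
  constructor
  · exact ENNReal.tsum_le_tsum fun ν => ENNReal.ofReal_le_ofReal (term_le ht ν)
  · set a : ℕ → ℝ≥0∞ := fun j => ENNReal.ofReal (t j) with ha
    have hs0 : (0:ℝ) ≤ ∑' j, t j := tsum_nonneg ht
    calc ∑' ν : ℕ →₀ ℕ, ENNReal.ofReal ((((nuAbs ν).factorial : ℝ) / (nuFact ν : ℝ)) * tPow t ν)
        = ∑' ν : ℕ →₀ ℕ,
            (Nat.multinomial ν.support ⇑ν : ℝ≥0∞) * ∏ j ∈ ν.support, a j ^ ν j :=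
          tsum_congr (term_eq ht)
      _ = ∑' ν : ℕ →₀ ℕ, ∑' n : ℕ, (if nuAbs ν = n then
            (Nat.multinomial ν.support ⇑ν : ℝ≥0∞) * ∏ j ∈ ν.support, a j ^ ν j else 0) := by
          refine tsum_congr fun ν => ?_
          rw [tsum_eq_single (nuAbs ν) fun b hb => if_neg fun h => hb h.symm, if_pos rfl]
      _ = ∑' n : ℕ, ∑' ν : ℕ →₀ ℕ, (if nuAbs ν = n then
            (Nat.multinomial ν.support ⇑ν : ℝ≥0∞) * ∏ j ∈ ν.support, a j ^ ν j else 0) :=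
          ENNReal.tsum_comm
      _ = ∑' n : ℕ, (∑' j, a j) ^ n := tsum_congr (tsum_H a)
      _ = (1 - ∑' j, a j)⁻¹ := ENNReal.tsum_geometric _
      _ = ENNReal.ofReal (1 / (1 - ∑' j, t j)) := by
          have hS : ∑' j, a j = ENNReal.ofReal (∑' j, t j) :=
            (ENNReal.ofReal_tsum_of_nonneg ht hsum).symm
          have h1 : (1:ℝ≥0∞) - ENNReal.ofReal (∑' j, t j)
              = ENNReal.ofReal (1 - ∑' j, t j) := by
            rw [ENNReal.ofReal_sub _ hs0, ENNReal.ofReal_one]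
          rw [hS, h1, ← ENNReal.ofReal_inv_of_pos (by linarith), one_div]

end
end

section
/- Let M ∈ ℕ and let ϱ = (ϱ_j)_{j∈ℕ} ∈ (0,∞)^∞ be such that ϱ₀ := min{1, inf_{j∈ℕ} ϱ_j} > 0. Then for every ν ∈ 𝓕, β_ν(M,ϱ) ≥ ∏_{j∈supp ν} (ϱ₀^{2M}/(M! · M^{2M})) ϱ_j² ν_j^M. -/
noncomputable section

private lemma nat_key (M n : ℕ) (hM : 1 ≤ M) :
    n ^ M ≤ M.factorial * M ^ (2 * M) * n.choose (min n M) := by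
  rcases le_total n M with h | h
  · rw [min_eq_left h, Nat.choose_self, mul_one]
    calc n ^ M ≤ M ^ M := Nat.pow_le_pow_left h M
      _ ≤ M ^ (2 * M) := Nat.pow_le_pow_right hM (by omega)
      _ ≤ M.factorial * M ^ (2 * M) :=
          Nat.le_mul_of_pos_left _ (Nat.factorial_pos M)
  · rw [min_eq_right h]
    obtain ⟨k, rfl⟩ := Nat.exists_eq_add_of_le h
    have hdesc : (M + k) ^ M ≤ M ^ M * (M + k).descFactorial M := by
      rw [Nat.descFactorial_eq_prod_range]
      have e1 : (M + k) ^ M = ∏ _i ∈ Finset.range M, (M + k) := by simp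
      have e2 : M ^ M = ∏ _i ∈ Finset.range M, M := by simp
      rw [e1, e2, ← Finset.prod_mul_distrib]
      apply Finset.prod_le_prod'
      intro i hi
      have hi' := Finset.mem_range.mp hi
      have hsub : M + k - i = (M - i) + k := by omega
      rw [hsub, Nat.mul_add]
      have h1 : M ≤ M * (M - i) := Nat.le_mul_of_pos_right M (by omega)
      have h2 : k ≤ M * k := Nat.le_mul_of_pos_left k (by omega)
      omega
    calc (M + k) ^ M ≤ M ^ M * (M + k).descFactorial M := hdesc
      _ = M ^ M * (M.factorial * (M + k).choose M) := by
          rw [Nat.descFactorial_eq_factorial_mul_choose]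
      _ ≤ M ^ (2 * M) * (M.factorial * (M + k).choose M) :=
          Nat.mul_le_mul_right _ (Nat.pow_le_pow_right hM (by omega))
      _ = M.factorial * M ^ (2 * M) * (M + k).choose M := by ring

/-- Step 1 of the proof of Lemma 4.1: the elementary lower bound for `β_ν(M,ϱ)`. -/
theorem betaF_lower_bound
    (M : ℕ) (hM : 1 ≤ M) (ϱ : ℕ → ℝ) (hϱpos : ∀ j, 0 < ϱ j)
    (h0 : 0 < min 1 (⨅ j, ϱ j)) :
    ∀ ν : ℕ →₀ ℕ,
      ∏ j ∈ ν.support,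
          (min 1 (⨅ i, ϱ i)) ^ (2 * M) / ((M.factorial : ℝ) * (M : ℝ) ^ (2 * M)) *
            ϱ j ^ 2 * (ν j : ℝ) ^ M
        ≤ betaF M ϱ ν := by
  intro ν
  set r0 : ℝ := min 1 (⨅ i, ϱ i) with hr0
  have hbdd : BddBelow (Set.range ϱ) := ⟨0, by rintro x ⟨i, rfl⟩; exact (hϱpos i).le⟩
  have hle : ∀ j, r0 ≤ ϱ j := fun j => (min_le_right _ _).trans (ciInf_le hbdd j)
  have h01 : r0 ≤ 1 := min_le_left _ _
  have hMpos : (0:ℝ) < (M.factorial : ℝ) * (M : ℝ) ^ (2 * M) := by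
    have : (0:ℝ) < (M:ℝ) := by exact_mod_cast hM
    positivity
  unfold betaF
  apply Finset.prod_le_prod
  · intro j _
    have := (hϱpos j).le
    have := h0.le
    positivity
  · intro j hj
    set n := ν j with hn
    have hnpos : 0 < n := Nat.pos_of_ne_zero (Finsupp.mem_support_iff.mp hj)
    set l := min n M with hl
    have hl1 : 1 ≤ l := le_min hnpos hM
    have hlM : l ≤ M := min_le_right _ _
    have hterm : (Nat.choose n l : ℝ) * ϱ j ^ (2 * l)
        ≤ ∑ ℓ ∈ Finset.range (M + 1), (Nat.choose n ℓ : ℝ) * ϱ j ^ (2 * ℓ) := by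
      apply Finset.single_le_sum (f := fun ℓ => (Nat.choose n ℓ : ℝ) * ϱ j ^ (2 * ℓ))
      · intro i _
        have := (hϱpos j).le
        positivity
      · exact Finset.mem_range.mpr (Nat.lt_succ_of_le hlM)
    have hA : (n:ℝ) ^ M / ((M.factorial : ℝ) * (M : ℝ) ^ (2 * M)) ≤ (Nat.choose n l : ℝ) := by
      rw [div_le_iff₀ hMpos]
      have := nat_key M n hM
      calc (n:ℝ) ^ M ≤ (M.factorial : ℝ) * (M:ℝ) ^ (2*M) * (Nat.choose n l : ℝ) := by
            exact_mod_cast this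
        _ = (Nat.choose n l : ℝ) * ((M.factorial : ℝ) * (M:ℝ) ^ (2*M)) := by ring
    have hB : r0 ^ (2 * M) * ϱ j ^ 2 ≤ ϱ j ^ (2 * l) := by
      have h1 : r0 ^ (2 * M) ≤ r0 ^ (2 * (l - 1)) :=
        pow_le_pow_of_le_one h0.le h01 (by omega)
      have h2 : r0 ^ (2 * (l - 1)) ≤ ϱ j ^ (2 * (l - 1)) :=
        pow_le_pow_left₀ h0.le (hle j) _
      calc r0 ^ (2 * M) * ϱ j ^ 2 ≤ ϱ j ^ (2 * (l - 1)) * ϱ j ^ 2 := by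
            apply mul_le_mul_of_nonneg_right (h1.trans h2) (sq_nonneg _)
        _ = ϱ j ^ (2 * (l - 1) + 2) := (pow_add _ _ _).symm
        _ = ϱ j ^ (2 * l) := by congr 1; omega
    have hrw : r0 ^ (2 * M) / ((M.factorial : ℝ) * (M : ℝ) ^ (2 * M)) * ϱ j ^ 2 * (n:ℝ) ^ M
        = ((n:ℝ) ^ M / ((M.factorial : ℝ) * (M : ℝ) ^ (2 * M))) * (r0 ^ (2 * M) * ϱ j ^ 2) := by
      ring
    rw [hrw]
    refine le_trans ?_ hterm
    apply mul_le_mul hA hB (by positivity) (Nat.cast_nonneg _)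
    -- nonneg of r0^(2M)*ϱ² handled by positivity? need h0, hϱpos
end
end

section
/- Let M ∈ ℕ and q > 0 with qM/2 > 1, and let (ϱ̂_j)_{j∈ℕ} be a sequence with ϱ̂_j ≥ 1 for all j and (ϱ̂_j^{-1})_{j∈ℕ} ∈ ℓ^q(ℕ). Then, with C := ∑_{n=1}^∞ n^{-qM/2} < ∞, one has ∑_{ν∈𝓕} ∏_{j∈supp ν} (ϱ̂_j² ν_j^M)^{-q/2} ≤ exp(C ∑_{j∈ℕ} ϱ̂_j^{-q}) < ∞; in particular, the family (∏_{j∈supp ν} (ϱ̂_j² ν_j^M)^{-q/2})_{ν∈𝓕} is summable. -/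
noncomputable section

open Finset

private lemma key_sum_prod_le (t : ℕ → ℕ → ℝ) (B : ℕ → ℝ)
    (ht0 : ∀ j, t j 0 = 1) (htnn : ∀ j n, 0 ≤ t j n)
    (htsum : ∀ j, HasSum (t j) (B j)) :
    ∀ S : Finset ℕ, ∀ F : Finset (ℕ →₀ ℕ), (∀ ν ∈ F, ν.support ⊆ S) →
      ∑ ν ∈ F, ∏ j ∈ S, t j (ν j) ≤ ∏ j ∈ S, B j := by
  have hB1 : ∀ j, (1 : ℝ) ≤ B j := fun j => by
    have := le_hasSum (htsum j) 0 (fun i _ => htnn j i)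
    rwa [ht0 j] at this
  intro S
  induction S using Finset.induction_on with
  | empty =>
      intro F hF
      simp only [Finset.prod_empty]
      have hsub : F ⊆ {0} := by
        intro ν hν
        have : ν.support = ∅ := Finset.subset_empty.mp (hF ν hν)
        simp [Finset.mem_singleton, ← Finsupp.support_eq_empty, this]
      calc ∑ _ν ∈ F, (1 : ℝ) ≤ ∑ _ν ∈ ({0} : Finset (ℕ →₀ ℕ)), (1 : ℝ) :=
            Finset.sum_le_sum_of_subset_of_nonneg hsub (fun _ _ _ => zero_le_one)
        _ = 1 := by simp
  | @insert i S' hiS' ih =>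
      intro F hF
      have hmaps : ∀ ν ∈ F, ν i ∈ F.image fun ν => ν i := fun ν hν =>
        Finset.mem_image_of_mem _ hν
      rw [← Finset.sum_fiberwise_of_maps_to hmaps]
      have hstep : ∀ n ∈ F.image fun ν => ν i,
          ∑ ν ∈ F.filter fun ν => ν i = n, ∏ j ∈ insert i S', t j (ν j)
            ≤ t i n * ∏ j ∈ S', B j := by
        intro n hn
        have hrw : ∀ ν ∈ F.filter fun ν => ν i = n,
            ∏ j ∈ insert i S', t j (ν j) = t i n * ∏ j ∈ S', t j (ν j) := by
          intro ν hν
          rw [Finset.prod_insert hiS', (Finset.mem_filter.mp hν).2]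
        rw [Finset.sum_congr rfl hrw, ← Finset.mul_sum]
        have hinj : Set.InjOn (fun ν : ℕ →₀ ℕ => ν.erase i)
            (F.filter fun ν => ν i = n) := by
          intro ν1 h1 ν2 h2 h12
          have e1 := (Finset.mem_filter.mp h1).2
          have e2 := (Finset.mem_filter.mp h2).2
          ext j
          rcases eq_or_ne j i with rfl | hj
          · rw [e1, e2]
          · have := congrFun (congrArg (fun f : ℕ →₀ ℕ => (f : ℕ → ℕ)) h12) j
            simpa [Finsupp.erase_ne hj] using this
        have hsum_img : ∑ ν ∈ F.filter fun ν => ν i = n, ∏ j ∈ S', t j (ν j)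
            = ∑ μ ∈ (F.filter fun ν => ν i = n).image fun ν => ν.erase i,
                ∏ j ∈ S', t j (μ j) := by
          rw [Finset.sum_image hinj]
          refine Finset.sum_congr rfl fun ν hν => Finset.prod_congr rfl fun j hj => ?_
          have hj' : j ≠ i := fun h => hiS' (h ▸ hj)
          rw [Finsupp.erase_ne hj']
        have hsub : ∀ μ ∈ (F.filter fun ν => ν i = n).image fun ν => ν.erase i,
            μ.support ⊆ S' := by
          intro μ hμ
          obtain ⟨ν, hν, rfl⟩ := Finset.mem_image.mp hμ
          intro j hj
          rw [Finsupp.support_erase, Finset.mem_erase] at hj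
          have := hF ν (Finset.mem_filter.mp hν).1 hj.2
          exact (Finset.mem_insert.mp this).resolve_left hj.1
        have hle := ih _ hsub
        rw [hsum_img]
        exact mul_le_mul_of_nonneg_left hle (htnn i n)
      calc ∑ n ∈ F.image (fun ν => ν i),
              ∑ ν ∈ F.filter fun ν => ν i = n, ∏ j ∈ insert i S', t j (ν j)
          ≤ ∑ n ∈ F.image (fun ν => ν i), t i n * ∏ j ∈ S', B j :=
            Finset.sum_le_sum hstep
        _ = (∑ n ∈ F.image (fun ν => ν i), t i n) * ∏ j ∈ S', B j := by
            rw [Finset.sum_mul]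
        _ ≤ B i * ∏ j ∈ S', B j := by
            refine mul_le_mul_of_nonneg_right ?_ ?_
            · exact sum_le_hasSum _ (fun n _ => htnn i n) (htsum i)
            · exact Finset.prod_nonneg fun j _ => le_trans zero_le_one (hB1 j)
        _ = ∏ j ∈ insert i S', B j := (Finset.prod_insert hiS').symm

/-- Step 3 of the proof of Lemma 4.1: summability over `𝓕` of
`∏_{j ∈ supp ν} (ϱ̂_j² ν_j^M)^{-q/2}` with an explicit exponential bound. -/
theorem prod_inverse_summable
    (M : ℕ) (q : ℝ) (hq : 0 < q) (hqM : 1 < q * M / 2)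
    (ϱh : ℕ → ℝ) (hϱh : ∀ j, 1 ≤ ϱh j) (hsum : Summable fun j => (ϱh j)⁻¹ ^ q) :
    (Summable fun n : ℕ => ((n : ℝ) + 1) ^ (-(q * M / 2))) ∧
    (Summable fun ν : ℕ →₀ ℕ =>
      ∏ j ∈ ν.support, (ϱh j ^ 2 * (ν j : ℝ) ^ M) ^ (-(q / 2))) ∧
    ∑' ν : ℕ →₀ ℕ, ∏ j ∈ ν.support, (ϱh j ^ 2 * (ν j : ℝ) ^ M) ^ (-(q / 2))
      ≤ Real.exp ((∑' n : ℕ, ((n : ℝ) + 1) ^ (-(q * M / 2))) * ∑' j, (ϱh j)⁻¹ ^ q) := by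
  have hϱ0 : ∀ j, 0 < ϱh j := fun j => lt_of_lt_of_le one_pos (hϱh j)
  -- summability of the zeta-like series
  have hC : Summable fun n : ℕ => ((n : ℝ) + 1) ^ (-(q * M / 2)) := by
    have h1 : Summable fun n : ℕ => ((n : ℝ)) ^ (-(q * M / 2)) :=
      Real.summable_nat_rpow.mpr (by linarith)
    have := (summable_nat_add_iff (f := fun n : ℕ => ((n : ℝ)) ^ (-(q * M / 2))) 1).mpr h1
    simpa [Nat.cast_add] using this
  set C := ∑' n : ℕ, ((n : ℝ) + 1) ^ (-(q * M / 2)) with hCdef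
  have hCnn : 0 ≤ C := tsum_nonneg fun n =>
    Real.rpow_nonneg (by positivity) _
  -- the per-coordinate weight
  set t : ℕ → ℕ → ℝ := fun j n =>
    if n = 0 then 1 else (ϱh j ^ 2 * (n : ℝ) ^ M) ^ (-(q / 2)) with htdef
  have ht0 : ∀ j, t j 0 = 1 := fun j => by simp [htdef]
  have htnn : ∀ j n, 0 ≤ t j n := by
    intro j n
    rcases eq_or_ne n 0 with rfl | hn
    · simp [htdef]
    · simp only [htdef, if_neg hn]
      exact Real.rpow_nonneg (by positivity) _
  -- value of the shifted terms
  have htshift : ∀ j n, t j (n + 1) = (ϱh j)⁻¹ ^ q * ((n : ℝ) + 1) ^ (-(q * M / 2)) := by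
    intro j n
    have hn1 : (0 : ℝ) < (n : ℝ) + 1 := by positivity
    simp only [htdef, if_neg (Nat.succ_ne_zero n)]
    push_cast
    rw [Real.mul_rpow (by positivity) (by positivity),
      ← Real.rpow_natCast (ϱh j) 2, ← Real.rpow_natCast ((n : ℝ) + 1) M,
      ← Real.rpow_mul (hϱ0 j).le, ← Real.rpow_mul hn1.le]
    congr 1
    · rw [Real.inv_rpow (hϱ0 j).le, ← Real.rpow_neg (hϱ0 j).le]
      congr 1
      push_cast
      ring
    · congr 1
      push_cast
      ring
  have htsum : ∀ j, HasSum (t j) (1 + (ϱh j)⁻¹ ^ q * C) := by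
    intro j
    have h1 : HasSum (fun n : ℕ => t j (n + 1)) ((ϱh j)⁻¹ ^ q * C) := by
      have := hC.hasSum.mul_left ((ϱh j)⁻¹ ^ q)
      simpa [htshift j] using this
    have := (hasSum_nat_add_iff (f := t j) 1).mp h1
    simpa [ht0 j, add_comm] using this
  -- the original term equals a product over any superset of the support
  have hterm : ∀ (S : Finset ℕ) (ν : ℕ →₀ ℕ), ν.support ⊆ S →
      ∏ j ∈ ν.support, (ϱh j ^ 2 * (ν j : ℝ) ^ M) ^ (-(q / 2)) = ∏ j ∈ S, t j (ν j) := by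
    intro S ν hS
    have h2 : ∏ j ∈ S, t j (ν j) = ∏ j ∈ ν.support, t j (ν j) := by
      refine (Finset.prod_subset hS fun j _ hj => ?_).symm
      have : ν j = 0 := Finsupp.notMem_support_iff.mp hj
      simp [htdef, this]
    rw [h2]
    refine Finset.prod_congr rfl fun j hj => ?_
    have : ν j ≠ 0 := Finsupp.mem_support_iff.mp hj
    simp [htdef, this]
  -- bound on arbitrary finite sums
  have hbound : ∀ F : Finset (ℕ →₀ ℕ),
      ∑ ν ∈ F, ∏ j ∈ ν.support, (ϱh j ^ 2 * (ν j : ℝ) ^ M) ^ (-(q / 2))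
        ≤ Real.exp (C * ∑' j, (ϱh j)⁻¹ ^ q) := by
    intro F
    set S : Finset ℕ := F.sup Finsupp.support with hSdef
    have hFS : ∀ ν ∈ F, ν.support ⊆ S := fun ν hν => Finset.le_sup hν
    have h1 : ∑ ν ∈ F, ∏ j ∈ ν.support, (ϱh j ^ 2 * (ν j : ℝ) ^ M) ^ (-(q / 2))
        = ∑ ν ∈ F, ∏ j ∈ S, t j (ν j) :=
      Finset.sum_congr rfl fun ν hν => hterm S ν (hFS ν hν)
    rw [h1]
    calc ∑ ν ∈ F, ∏ j ∈ S, t j (ν j)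
        ≤ ∏ j ∈ S, (1 + (ϱh j)⁻¹ ^ q * C) :=
          key_sum_prod_le t _ ht0 htnn htsum S F hFS
      _ ≤ ∏ j ∈ S, Real.exp ((ϱh j)⁻¹ ^ q * C) := by
          refine Finset.prod_le_prod (fun j _ => ?_) fun j _ => ?_
          · have := Real.rpow_nonneg (inv_nonneg.mpr (hϱ0 j).le) q
            nlinarith [hCnn]
          · have := Real.add_one_le_exp ((ϱh j)⁻¹ ^ q * C)
            linarith
      _ = Real.exp (∑ j ∈ S, (ϱh j)⁻¹ ^ q * C) := (Real.exp_sum S _).symm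
      _ ≤ Real.exp (C * ∑' j, (ϱh j)⁻¹ ^ q) := by
          refine Real.exp_le_exp.mpr ?_
          have : ∑ j ∈ S, (ϱh j)⁻¹ ^ q * C = (∑ j ∈ S, (ϱh j)⁻¹ ^ q) * C := by
            rw [Finset.sum_mul]
          rw [this, mul_comm]
          refine mul_le_mul_of_nonneg_left ?_ hCnn
          exact Summable.sum_le_tsum S (fun j _ => Real.rpow_nonneg (inv_nonneg.mpr (hϱ0 j).le) _) hsum
  have hFnn : ∀ ν : ℕ →₀ ℕ,
      0 ≤ ∏ j ∈ ν.support, (ϱh j ^ 2 * (ν j : ℝ) ^ M) ^ (-(q / 2)) := fun ν =>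
    Finset.prod_nonneg fun j _ => Real.rpow_nonneg (by positivity) _
  have hSummable : Summable fun ν : ℕ →₀ ℕ =>
      ∏ j ∈ ν.support, (ϱh j ^ 2 * (ν j : ℝ) ^ M) ^ (-(q / 2)) :=
    summable_of_sum_le hFnn hbound
  exact ⟨hC, hSummable, Summable.tsum_le_of_sum_le hSummable hbound⟩

end
end
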